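/- arXiv:2505.22136 — 7 statements merged into one kernel-verified Lean document; each statement's English description precedes it below -/
import Mathlib

section
/- Let μ be a Borel probability measure on ℝ and suppose there exists C > 0 such that |μ̂(ξ)| ≤ C|ξ|^{-1} for all ξ ∈ ℝ \ {0}. If a countable set Λ ⊂ ℝ, enumerated in increasing order as Λ = {λ_k : k ∈ ℤ}, satisfies the lower frame inequality ∑_{λ∈Λ} |∫ f(x) e^{-2πiλx} dμ(x)|² ≥ A ∫ |f(x)|² dμ(x) for all f ∈ L²(μ) and some A > 0, then g_min(Λ) · g_max(Λ) ≤ C²π²/A. -/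
open MeasureTheory Filter Set
open scoped Real

/-- The essential minimal spectral gap of an increasing enumeration `lam : ℤ → ℝ`:
`inf {c ≥ 0 : g_k < c for infinitely many k}` where `g_k = lam k - lam (k-1)`. -/
noncomputable def gmin (lam : ℤ → ℝ) : ℝ :=
  sInf {c : ℝ | 0 ≤ c ∧ {k : ℤ | lam k - lam (k - 1) < c}.Infinite}

/-- The essential maximal spectral gap of an increasing enumeration `lam : ℤ → ℝ`:
`sup {c ≥ 0 : g_k > c for infinitely many k}` where `g_k = lam k - lam (k-1)`. -/
noncomputable def gmax (lam : ℤ → ℝ) : ℝ :=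
  sSup {c : ℝ | 0 ≤ c ∧ {k : ℤ | c < lam k - lam (k - 1)}.Infinite}

/-- The Fourier transform of a measure on `ℝ`: `μ̂(ξ) = ∫ e^{-2πiξx} dμ(x)`. -/
noncomputable def muHat (μ : Measure ℝ) (ξ : ℝ) : ℂ :=
  ∫ x, Complex.exp ((-2 * π * ξ * x : ℝ) * Complex.I) ∂μ

lemma inv_sq_le_inv_sq {a x : ℝ} (ha : 0 < a) (h : a ≤ x) : 1/x^2 ≤ 1/a^2 := by
  apply one_div_le_one_div_of_le (by positivity)
  exact pow_le_pow_left₀ ha.le h 2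

lemma summable_shift (s : ℝ) (hs : 0 < s) : Summable (fun i : ℕ => 1/(s+i)^2) := by
  have hbase : Summable (fun i : ℕ => 1/((i:ℝ)+1)^2) := by
    have := Real.summable_one_div_nat_pow.mpr (one_lt_two)
    exact_mod_cast (summable_nat_add_iff 1).mpr this
  set B : ℝ := max (1/s) 1 with hB
  have hB1 : 1 ≤ B := le_max_right _ _
  have hBpos : 0 < B := lt_of_lt_of_le one_pos hB1
  refine Summable.of_nonneg_of_le (fun i => by positivity) (fun i => ?_) (hbase.mul_left (B^2))
  have key : (i:ℝ) + 1 ≤ B * (s + i) := by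
    have h1 : 1 ≤ B * s := by
      have : (1/s) * s ≤ B * s := by gcongr; exact le_max_left _ _
      rwa [one_div_mul_cancel hs.ne'] at this
    have h2 : (i:ℝ) ≤ B * i := le_mul_of_one_le_left (Nat.cast_nonneg i) hB1
    calc (i:ℝ) + 1 ≤ B * i + B * s := by linarith
      _ = B * (s + i) := by ring
  have hsi : (0:ℝ) < s + i := by positivity
  rw [mul_one_div]
  rw [div_le_div_iff₀ (by positivity) (by positivity)]
  calc (1:ℝ) * ((i:ℝ)+1)^2 ≤ (B*(s+i))^2 := by
        rw [one_mul]; exact pow_le_pow_left₀ (by positivity) key 2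
    _ = B^2 * (s+i)^2 := by ring


lemma odd_basel : HasSum (fun i : ℕ => 1/((2*(i:ℝ)+1))^2) (π^2/8) := by
  have htot : HasSum (fun n : ℕ => (1:ℝ)/(n:ℝ)^2) (π^2/6) := hasSum_zeta_two
  have heven : HasSum (fun k : ℕ => (1:ℝ)/((2*k:ℕ):ℝ)^2) (π^2/24) := by
    have h4 := htot.mul_left (1/4)
    have heq : ∀ k : ℕ, (1:ℝ)/((2*k:ℕ):ℝ)^2 = (1/4) * ((1:ℝ)/(k:ℝ)^2) := by
      intro k
      push_cast
      rcases Nat.eq_zero_or_pos k with rfl | hk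
      · norm_num
      · have hne : ((k:ℝ)) ≠ 0 := Nat.cast_ne_zero.mpr hk.ne'
        field_simp
        ring
    have h5 : HasSum (fun k : ℕ => (1:ℝ)/((2*k:ℕ):ℝ)^2) (1/4 * (π^2/6)) := h4.congr_fun heq
    convert h5 using 1
    ring
  have hodd_sum : Summable (fun i : ℕ => (1:ℝ)/((2*i+1:ℕ):ℝ)^2) := by
    have h2 := (summable_shift (1/2) (by norm_num)).mul_left (1/4)
    apply h2.congr
    intro i
    have h3 : ((2*i+1:ℕ):ℝ) = 2*((1:ℝ)/2 + i) := by push_cast; ring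
    rw [h3]
    rw [mul_pow]
    rw [mul_one_div, div_div]
    norm_num
  have hcomb := HasSum.even_add_odd (f := fun n : ℕ => (1:ℝ)/(n:ℝ)^2) heven hodd_sum.hasSum
  have huniq : π^2/24 + (∑' i : ℕ, (1:ℝ)/((2*i+1:ℕ):ℝ)^2) = π^2/6 := hcomb.unique htot
  have he2 : (∑' i : ℕ, (1:ℝ)/((2*i+1:ℕ):ℝ)^2) = π^2/8 := by linarith
  have hfin := he2 ▸ hodd_sum.hasSum
  apply hfin.congr_fun
  intro i; push_cast; norm_num

lemma key_ineq {s : ℝ} (hs : 1/2 ≤ s) : ∑' i : ℕ, 1/(s+(i:ℝ))^2 ≤ π^2/(4*s) := by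
  have hs0 : (0:ℝ) < s := by linarith
  have hsum := summable_shift s hs0
  rw [le_div_iff₀ (by positivity)]
  have hg : HasSum (fun i : ℕ => 8*(1/(2*(i:ℝ)+1)^2)) (π^2) := by
    have := odd_basel.mul_left 8
    convert this using 1
    exacts [rfl, by ring]
  have hf : HasSum (fun i : ℕ => (4*s)*(1/(s+(i:ℝ))^2)) ((∑' i:ℕ, 1/(s+(i:ℝ))^2)*(4*s)) := by
    have := hsum.hasSum.mul_left (4*s)
    convert this using 1
    exacts [rfl, by ring]
  have hdiff := hg.sub hf
  have hkey : 0 ≤ π^2 - (∑' i:ℕ, 1/(s+(i:ℝ))^2)*(4*s) := by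
    rw [← hdiff.tsum_eq]
    rcases eq_or_lt_of_le hs with heq | hlt
    · have hz : ∀ i : ℕ, 8*(1/(2*(i:ℝ)+1)^2) - (4*s)*(1/(s+(i:ℝ))^2) = 0 := by
        intro i
        rw [← heq]
        have h1 : (2*(i:ℝ)+1) ≠ 0 := by positivity
        have h2 : ((1:ℝ)/2+(i:ℝ)) ≠ 0 := by positivity
        field_simp
        ring
      rw [tsum_congr hz, tsum_zero]
    · set b : ℕ → ℝ := fun i => (s-2*(i:ℝ)^2)/((2*(i:ℝ)+1)^2*(s+(i:ℝ))^2) with hbdef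
      have hident : ∀ i : ℕ, 8*(1/(2*(i:ℝ)+1)^2) - (4*s)*(1/(s+(i:ℝ))^2) = (8*(s-1/2))*b i := by
        intro i
        have h1 : (2*(i:ℝ)+1) ≠ 0 := by positivity
        have h2 : (s+(i:ℝ)) ≠ 0 := by positivity
        simp only [hbdef]
        field_simp
        ring
      have hne : (8*(s-1/2)) ≠ 0 := by
        have : (0:ℝ) < s - 1/2 := by linarith
        positivity
      have hbsum : Summable b := by
        have h6 := (hg.summable.sub hf.summable).mul_left (8*(s-1/2))⁻¹
        apply h6.congr
        intro i
        rw [hident i, ← mul_assoc, inv_mul_cancel₀ hne, one_mul]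
      have htb : ∑' i : ℕ, (8*(1/(2*(i:ℝ)+1)^2) - (4*s)*(1/(s+(i:ℝ))^2)) = (8*(s-1/2)) * ∑' i : ℕ, b i := by
        rw [tsum_congr hident, tsum_mul_left]
      rw [htb]
      apply mul_nonneg (by linarith)
      -- show 0 ≤ ∑' b
      have hb0 : b 0 = 1/s := by
        simp only [hbdef]
        norm_num
        rw [sq]
        field_simp
      have hsplit : ∑' i, b i = b 0 + ∑' i, b (i+1) := hbsum.tsum_eq_zero_add
      set cc : ℕ → ℝ := fun i => (1/2)*(1/(s+(i:ℝ)+1/2) - 1/(s+(i:ℝ)+3/2)) with hccdef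
      have hccnn : ∀ i, 0 ≤ cc i := by
        intro i
        simp only [hccdef]
        have : 1/(s+(i:ℝ)+3/2) ≤ 1/(s+(i:ℝ)+1/2) := by
          apply one_div_le_one_div_of_le (by positivity)
          linarith
        linarith
      have hccsum_bound : ∀ n, ∑ i ∈ Finset.range n, cc i ≤ 1/(2*(s+1/2)) := by
        intro n
        have htel : ∑ i ∈ Finset.range n, ((fun j : ℕ => 1/(s+(j:ℝ)+1/2)) i - (fun j : ℕ => 1/(s+(j:ℝ)+1/2)) (i+1)) = 1/(s+(0:ℕ)+1/2) - 1/(s+(n:ℝ)+1/2) := by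
          rw [Finset.sum_range_sub' (f := fun j : ℕ => 1/(s+(j:ℝ)+1/2))]
        have heqcc : ∀ i ∈ Finset.range n, cc i = (1/2) * ((fun j : ℕ => 1/(s+(j:ℝ)+1/2)) i - (fun j : ℕ => 1/(s+(j:ℝ)+1/2)) (i+1)) := by
          intro i _
          simp only [hccdef]
          push_cast
          ring_nf
        rw [Finset.sum_congr rfl heqcc, ← Finset.mul_sum, htel]
        have h7 : (0:ℝ) ≤ 1/(s+(n:ℝ)+1/2) := by positivity
        have h8 : 1/(s+(0:ℕ)+1/2) = 1/(s+1/2) := by norm_num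
        rw [h8]
        rw [one_div (2*(s+1/2))]
        rw [mul_inv]
        calc (1/2) * (1/(s+1/2) - 1/(s+(n:ℝ)+1/2)) ≤ (1/2)*(1/(s+1/2)) := by
              apply mul_le_mul_of_nonneg_left _ (by norm_num)
              linarith
          _ = (2:ℝ)⁻¹ * (s+1/2)⁻¹ := by rw [one_div, one_div]
      have hccsum : Summable cc := summable_of_sum_range_le hccnn hccsum_bound
      have hcc_tsum : ∑' i, cc i ≤ 1/(2*(s+1/2)) := Real.tsum_le_of_sum_range_le hccnn hccsum_bound
      have hterm : ∀ i : ℕ, -(b (i+1)) ≤ cc i := by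
        intro i
        have hx : (0:ℝ) < s + (i:ℝ) + 1 := by positivity
        have e1 : -(b (i+1)) = (2*((i:ℝ)+1)^2 - s)/((2*(i:ℝ)+3)^2*(s+(i:ℝ)+1)^2) := by
          simp only [hbdef]
          push_cast
          rw [neg_div']
          ring_nf
        have e2 : cc i = 1/(2*((s+(i:ℝ)+1/2)*(s+(i:ℝ)+3/2))) := by
          simp only [hccdef]
          have d1 : (s+(i:ℝ)+1/2) ≠ 0 := by positivity
          have d2 : (s+(i:ℝ)+3/2) ≠ 0 := by positivity
          field_simp
          ring
        rw [e1, e2]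
        rw [div_le_div_iff₀ (by positivity) (by positivity)]
        nlinarith [sq_nonneg (s+(i:ℝ)), sq_nonneg ((i:ℝ)+1), hs0.le, hx.le, sq_nonneg ((i:ℝ)+1+s), (Nat.cast_nonneg i : (0:ℝ) ≤ (i:ℝ)), mul_nonneg (mul_nonneg hs0.le hx.le) hx.le, sq_nonneg ((i:ℝ)*s)]
      have hb' : Summable (fun i => b (i+1)) := (summable_nat_add_iff 1).mpr hbsum
      have htail : -(∑' i, b (i+1)) ≤ 1/(2*(s+1/2)) := by
        rw [← tsum_neg]
        exact le_trans (Summable.tsum_le_tsum hterm hb'.neg hccsum) hcc_tsum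
      have hfin : 1/(2*(s+1/2)) ≤ 1/s := by
        apply one_div_le_one_div_of_le hs0
        linarith
      rw [hsplit, hb0]
      linarith
  linarith

lemma scaled_eq {c g : ℝ} (hc : 0 < c) (i : ℕ) :
    1/(g/2+(i:ℝ)*c)^2 = (1/c^2) * (1/(g/(2*c)+(i:ℝ))^2) := by
  have h1 : g/2+(i:ℝ)*c = c * (g/(2*c)+(i:ℝ)) := by
    field_simp
  rw [h1]
  simp only [one_div, mul_pow, mul_inv]

lemma scaled_summable {c g : ℝ} (hc : 0 < c) (hg : 0 < g) :
    Summable (fun i : ℕ => 1/(g/2+(i:ℝ)*c)^2) := by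
  have hs : 0 < g/(2*c) := by positivity
  have := (summable_shift _ hs).mul_left (1/c^2)
  exact this.congr (fun i => (scaled_eq hc i).symm)

lemma scaled_key {c g : ℝ} (hc : 0 < c) (hcg : c ≤ g) :
    ∑' i : ℕ, 1/(g/2+(i:ℝ)*c)^2 ≤ π^2/(2*c*g) := by
  have hg : 0 < g := lt_of_lt_of_le hc hcg
  have hs : 1/2 ≤ g/(2*c) := by
    rw [div_le_div_iff₀ (by norm_num) (by positivity)]
    linarith
  calc ∑' i : ℕ, 1/(g/2+(i:ℝ)*c)^2
      = ∑' i : ℕ, (1/c^2) * (1/(g/(2*c)+(i:ℝ))^2) := tsum_congr (fun i => scaled_eq hc i)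
    _ = (1/c^2) * ∑' i : ℕ, (1/(g/(2*c)+(i:ℝ))^2) := tsum_mul_left
    _ ≤ (1/c^2) * (π^2/(4*(g/(2*c)))) := by
        apply mul_le_mul_of_nonneg_left (key_ineq hs) (by positivity)
    _ = π^2/(2*c*g) := by
        field_simp
        ring

lemma tail_summable_and_bound {c T : ℝ} (hc : 0 < c) (hT : 0 < T) :
    Summable (fun i : ℕ => 1/(T+((i:ℝ)+1)*c)^2) ∧
      ∑' i : ℕ, 1/(T+((i:ℝ)+1)*c)^2 ≤ 1/(c*T) := by
  have hnn : ∀ i : ℕ, (0:ℝ) ≤ 1/(T+((i:ℝ)+1)*c)^2 := fun i => by positivity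
  have hbd : ∀ n, ∑ i ∈ Finset.range n, 1/(T+((i:ℝ)+1)*c)^2 ≤ 1/(c*T) := by
    intro n
    set u : ℕ → ℝ := fun j => (1/c)*(1/(T+(j:ℝ)*c+c/2)) with hudef
    have hterm : ∀ i : ℕ, 1/(T+((i:ℝ)+1)*c)^2 ≤ u i - u (i+1) := by
      intro i
      have hP : (0:ℝ) < T+(i:ℝ)*c+c/2 := by positivity
      have hQ : (0:ℝ) < T+((i:ℝ)+1)*c+c/2 := by positivity
      have e1 : u i - u (i+1) = 1/((T+(i:ℝ)*c+c/2)*(T+((i:ℝ)+1)*c+c/2)) := by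
        simp only [hudef]
        push_cast
        field_simp
        ring
      rw [e1]
      apply one_div_le_one_div_of_le (by positivity)
      nlinarith [sq_nonneg c]
    calc ∑ i ∈ Finset.range n, 1/(T+((i:ℝ)+1)*c)^2
        ≤ ∑ i ∈ Finset.range n, (u i - u (i+1)) := Finset.sum_le_sum (fun i _ => hterm i)
      _ = u 0 - u n := Finset.sum_range_sub' u n
      _ ≤ u 0 := by
          have : 0 ≤ u n := by simp only [hudef]; positivity
          linarith
      _ ≤ 1/(c*T) := by
          simp only [hudef]
          rw [Nat.cast_zero, zero_mul, add_zero, mul_one_div, div_div]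
          apply one_div_le_one_div_of_le (by positivity)
          nlinarith
  exact ⟨summable_of_sum_range_le hnn hbd, Real.tsum_le_of_sum_range_le hnn hbd⟩

lemma chain (lam : ℤ → ℝ) (c : ℝ) (j₀ : ℤ) :
    ∀ n : ℕ, (∀ i : ℕ, i < n → c ≤ lam (j₀ + i + 1) - lam (j₀ + i)) →
      (n:ℝ)*c ≤ lam (j₀ + (n:ℤ)) - lam j₀ := by
  intro n
  induction n with
  | zero => intro _; simp
  | succ m ih =>
    intro h
    have h1 := ih (fun i hi => h i (by omega))
    have h2 := h m (by omega)
    have he : (j₀ + ((m:ℕ)+1 : ℤ)) = j₀ + (m:ℕ) + 1 := by ring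
    push_cast
    rw [he]
    push_cast at h1
    linarith

set_option maxHeartbeats 2000000 in
lemma sumbound (lam : ℤ → ℝ) (hmono : StrictMono lam) {A C c d : ℝ}
    (hA : 0 < A) (hC : 0 < C) (hc : 0 < c) (hd : 0 < d) (K : ℤ) (hK : 0 ≤ K)
    (hreg : ∀ m : ℤ, K < |m| → c ≤ lam m - lam (m-1))
    (hbig : ∀ N : ℤ, ∃ k : ℤ, N < k ∧ d < lam k - lam (k-1))
    (hA' : ∀ t : ℝ, (∀ j, lam j ≠ t) → Summable (fun j : ℤ => 1/(lam j - t)^2) →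
          A ≤ C^2 * ∑' j : ℤ, 1/(lam j - t)^2) :
    A * (c * d) ≤ C^2 * π^2 := by
  have key : ∀ ε : ℝ, 0 < ε → A ≤ C^2 * (π^2/(c*d)) + ε := by
    intro ε hε
    -- choose threshold M and a big gap far to the right
    set M : ℝ := max 1 (max (Real.sqrt ((2*(K:ℝ)+2)*(2*C^2)/ε)) (2*C^2/(ε*c))) with hMdef
    have hM1 : (1:ℝ) ≤ M := le_max_left _ _
    have hM0 : (0:ℝ) < M := lt_of_lt_of_le one_pos hM1
    obtain ⟨k, hkN, hgap⟩ := hbig (K + 1 + ⌈M/c⌉)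
    have hceil : (0:ℤ) ≤ ⌈M/c⌉ := Int.ceil_nonneg (by positivity)
    have hkK : K + 1 < k := by omega
    set g : ℝ := lam k - lam (k-1) with hgdef
    have hg0 : 0 < g := lt_trans hd hgap
    have hgc : c ≤ g := by
      have : K < |k| := by rw [abs_of_pos (by omega : (0:ℤ) < k)]; omega
      exact hreg k this
    set t : ℝ := (lam (k-1) + lam k)/2 with htdef
    have hth : lam k - t = g/2 := by rw [htdef, hgdef]; ring
    have htl : t - lam (k-1) = g/2 := by rw [htdef, hgdef]; ring
    set T : ℝ := ((k-1-K : ℤ) : ℝ) * c with hTdef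
    have hkc : (1:ℤ) ≤ k - 1 - K := by omega
    have hT0 : 0 < T := by
      rw [hTdef]
      have : (1:ℝ) ≤ ((k-1-K : ℤ) : ℝ) := by exact_mod_cast hkc
      nlinarith
    have hTM : M ≤ T := by
      rw [hTdef]
      have h1 : (⌈M/c⌉ : ℝ) + 1 ≤ ((k-1-K : ℤ) : ℝ) := by exact_mod_cast (by omega : ⌈M/c⌉ + 1 ≤ k - 1 - K)
      have h2 : M/c ≤ (⌈M/c⌉ : ℝ) := Int.le_ceil _
      have h3 : M/c ≤ ((k-1-K : ℤ) : ℝ) := by linarith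
      calc M = (M/c)*c := by field_simp
        _ ≤ ((k-1-K : ℤ) : ℝ) * c := by gcongr
    -- t is not in the range of lam
    have htne : ∀ j : ℤ, lam j ≠ t := by
      intro j
      rcases le_or_gt j (k-1) with hj | hj
      · have : lam j ≤ lam (k-1) := hmono.monotone hj
        have : lam j < t := by nlinarith [htl]
        exact ne_of_lt this
      · have : lam k ≤ lam j := hmono.monotone (by omega)
        have : t < lam j := by nlinarith [hth]
        exact ne_of_gt this
    -- distance bound right side
    have hright : ∀ n : ℕ, g/2 + (n:ℝ)*c ≤ lam (k + (n:ℤ)) - t := by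
      intro n
      have hch := chain lam c k n (fun i hi => by
        have hidx : K < |k + (i:ℤ) + 1| := by
          rw [abs_of_pos (by omega : (0:ℤ) < k + i + 1)]; omega
        have := hreg (k + i + 1) hidx
        have he : (k + (i:ℤ) + 1) - 1 = k + i := by ring
        rwa [he] at this)
      have : lam (k + (n:ℤ)) - t = (lam (k + (n:ℤ)) - lam k) + g/2 := by rw [hth.symm]; ring
      rw [this]
      linarith
    -- distance bound left regular side
    have hleft : ∀ n : ℕ, (K ≤ k - 1 - (n:ℤ)) → g/2 + (n:ℝ)*c ≤ t - lam (k - 1 - (n:ℤ)) := by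
      intro n hn
      have hch := chain lam c (k - 1 - n) n (fun i hi => by
        have hidx : K < |k - 1 - (n:ℤ) + (i:ℤ) + 1| := by
          rw [abs_of_pos (by omega : (0:ℤ) < k - 1 - (n:ℤ) + i + 1)]; omega
        have := hreg (k - 1 - n + i + 1) hidx
        have he : (k - 1 - (n:ℤ) + i + 1) - 1 = k - 1 - (n:ℤ) + i := by ring
        rwa [he] at this)
      have he2 : k - 1 - (n:ℤ) + (n:ℤ) = k - 1 := by ring
      rw [he2] at hch
      have : t - lam (k - 1 - (n:ℤ)) = (lam (k-1) - lam (k - 1 - (n:ℤ))) + g/2 := by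
        rw [htl.symm]; ring
      rw [this]
      linarith
    -- lam K is far from t
    have hlamK : lam K ≤ t - T := by
      have := hleft (k - 1 - K).toNat (by
        rw [Int.toNat_of_nonneg (by omega)]; omega)
      rw [Int.toNat_of_nonneg (by omega : (0:ℤ) ≤ k - 1 - K)] at this
      have he : k - 1 - (k - 1 - K) = K := by ring
      rw [he] at this
      have hcast : (((k - 1 - K).toNat : ℕ) : ℝ) = ((k - 1 - K : ℤ) : ℝ) := by
        exact_mod_cast Int.toNat_of_nonneg (by omega : (0:ℤ) ≤ k - 1 - K)
      rw [hcast] at this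
      rw [hTdef]
      linarith
    -- far left tail
    have hfar : ∀ m : ℕ, T + ((m:ℝ)+1)*c ≤ t - lam (-K - 2 - (m:ℤ)) := by
      intro m
      have hch := chain lam c (-K - 2 - m) (m+1) (fun i hi => by
        have hidx : K < |(-K - 2 - (m:ℤ)) + i + 1| := by
          rw [abs_of_neg (by omega : (-K - 2 - (m:ℤ)) + i + 1 < 0)]; omega
        have := hreg ((-K - 2 - m) + i + 1) hidx
        have he : ((-K - 2 - (m:ℤ)) + i + 1) - 1 = (-K - 2 - (m:ℤ)) + i := by ring
        rwa [he] at this)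
      have he2 : (-K - 2 - (m:ℤ)) + ((m:ℕ)+1 : ℤ) = -K - 1 := by push_cast; ring
      push_cast at hch
      rw [(by push_cast; ring : (-K - 2 - (m:ℤ)) + (((m:ℕ):ℤ)+1) = -K - 1)] at hch
      have hmono2 : lam (-K - 1) ≤ lam K := hmono.monotone (by omega)
      push_cast
      linarith [hlamK]
    -- === sum assembly ===
    set f : ℤ → ℝ := fun j => 1/(lam j - t)^2 with hfdef
    set q : ℕ → ℝ := fun n => 1/(g/2+(n:ℝ)*c)^2 with hqdef
    have hqsum : Summable q := scaled_summable hc hg0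
    have hqts : ∑' n, q n ≤ π^2/(2*c*g) := scaled_key hc hgc
    set a : ℕ := (k - 1 - K).toNat with hadef
    set b : ℕ := (k + K).toNat with hbdef2
    have ha_eq : (a:ℤ) = k - 1 - K := Int.toNat_of_nonneg (by omega)
    have hb_eq : (b:ℤ) = k + K := Int.toNat_of_nonneg (by omega)
    set r : ℕ → ℝ := fun m => 1/(T+((m:ℝ)+1)*c)^2 with hrdef
    obtain ⟨hrsum, hrts⟩ := tail_summable_and_bound hc hT0
    set w1 : ℕ → ℝ := fun n => if n ∈ Finset.Icc (a+1) b then 1/T^2 else 0 with hw1def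
    set v : ℕ → ℝ := fun n => if b+1 ≤ n then r (n-(b+1)) else 0 with hvdef
    have hw1nn : ∀ n, 0 ≤ w1 n := by
      intro n; simp only [hw1def]
      split <;> positivity
    have hvnn : ∀ n, 0 ≤ v n := by
      intro n; simp only [hvdef, hrdef]
      split <;> positivity
    have hqnn : ∀ n, 0 ≤ q n := fun n => by simp only [hqdef]; positivity
    -- pointwise bound on the negative side
    have hneg_ptwise : ∀ n : ℕ, f (k - 1 - (n:ℤ)) ≤ q n + (w1 n + v n) := by
      intro n
      rcases le_or_gt n a with hna | hna
      · have hKn : K ≤ k - 1 - (n:ℤ) := by omega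
        have hdist := hleft n hKn
        have h0 : (0:ℝ) < g/2 + (n:ℝ)*c := by positivity
        have heq : f (k - 1 - (n:ℤ)) = 1/(t - lam (k - 1 - (n:ℤ)))^2 := by
          simp only [hfdef]
          rw [show (lam (k-1-(n:ℤ)) - t)^2 = (t - lam (k-1-(n:ℤ)))^2 by ring]
        rw [heq]
        have := inv_sq_le_inv_sq h0 hdist
        calc 1/(t - lam (k - 1 - (n:ℤ)))^2 ≤ 1/(g/2+(n:ℝ)*c)^2 := this
          _ ≤ q n + (w1 n + v n) := by
              have := hw1nn n; have := hvnn n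
              simp only [hqdef]; linarith
      · rcases le_or_gt n b with hnb | hnb
        · -- middle region
          have hj : k - 1 - (n:ℤ) ≤ K := by omega
          have hmono3 : lam (k - 1 - (n:ℤ)) ≤ lam K := hmono.monotone hj
          have hdist : T ≤ t - lam (k - 1 - (n:ℤ)) := by linarith [hlamK]
          have heq : f (k - 1 - (n:ℤ)) = 1/(t - lam (k - 1 - (n:ℤ)))^2 := by
            simp only [hfdef]
            rw [show (lam (k-1-(n:ℤ)) - t)^2 = (t - lam (k-1-(n:ℤ)))^2 by ring]
          rw [heq]
          have h2 := inv_sq_le_inv_sq hT0 hdist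
          have hw1n : w1 n = 1/T^2 := by
            simp only [hw1def]
            rw [if_pos (Finset.mem_Icc.mpr ⟨by omega, hnb⟩)]
          rw [hw1n]
          have := hqnn n; have := hvnn n
          linarith
        · -- tail region
          set m : ℕ := n - (b+1) with hmdef
          have hnm : n = b + 1 + m := by omega
          have hidx : k - 1 - (n:ℤ) = -K - 2 - (m:ℤ) := by
            have : (n:ℤ) = (b:ℤ) + 1 + (m:ℤ) := by exact_mod_cast hnm
            omega
          have hdist := hfar m
          rw [hidx] at *
          have h0 : (0:ℝ) < T + ((m:ℝ)+1)*c := by positivity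
          have heq : f (-K - 2 - (m:ℤ)) = 1/(t - lam (-K - 2 - (m:ℤ)))^2 := by
            simp only [hfdef]
            rw [show (lam (-K-2-(m:ℤ)) - t)^2 = (t - lam (-K-2-(m:ℤ)))^2 by ring]
          rw [heq]
          have h2 := inv_sq_le_inv_sq h0 hdist
          have hvn : v n = r m := by
            simp only [hvdef]
            rw [if_pos (by omega : b+1 ≤ n)]
          rw [hvn]
          have := hqnn n; have := hw1nn n
          simp only [hrdef]
          linarith
    -- majorant sums
    have hw1sum : Summable w1 := by
      apply summable_of_ne_finset_zero (s := Finset.Icc (a+1) b)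
      intro n hn
      simp only [hw1def]
      rw [if_neg hn]
    have hcardcast : ((b - a : ℕ) : ℝ) = 2*(K:ℝ)+1 := by
      have : ((b - a : ℕ) : ℤ) = 2*K+1 := by omega
      exact_mod_cast this
    have hw1ts : ∑' n, w1 n ≤ (2*(K:ℝ)+1)/T^2 := by
      rw [tsum_eq_sum (s := Finset.Icc (a+1) b) (fun n hn => by simp only [hw1def]; rw [if_neg hn])]
      have : ∀ n ∈ Finset.Icc (a+1) b, w1 n = 1/T^2 := by
        intro n hn; simp only [hw1def]; rw [if_pos hn]
      rw [Finset.sum_congr rfl this, Finset.sum_const, Nat.card_Icc]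
      have : (b + 1 - (a+1) : ℕ) = b - a := by omega
      rw [this]
      rw [nsmul_eq_mul, hcardcast]
      apply le_of_eq
      ring
    have hvshift : (fun n : ℕ => v (n + (b+1))) = r := by
      funext n
      simp only [hvdef]
      rw [if_pos (by omega : b+1 ≤ n+(b+1))]
      congr 1
      omega
    have hvsum : Summable v := by
      apply (summable_nat_add_iff (b+1)).mp
      rw [hvshift]
      exact hrsum
    have hvts : ∑' n, v n ≤ 1/(c*T) := by
      have hsplit := (hvsum.sum_add_tsum_nat_add (b+1)).symm
      have hz : ∑ i ∈ Finset.range (b+1), v i = 0 := by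
        apply Finset.sum_eq_zero
        intro i hi
        simp only [hvdef]
        rw [if_neg (by simp at hi; omega)]
      rw [hsplit, hz, zero_add]
      calc ∑' n : ℕ, v (n + (b+1)) = ∑' n : ℕ, r n := by rw [hvshift]
        _ ≤ 1/(c*T) := hrts
    have hmajsum : Summable (fun n : ℕ => q n + (w1 n + v n)) := hqsum.add (hw1sum.add hvsum)
    have hnegnn : ∀ n : ℕ, 0 ≤ f (k-1-(n:ℤ)) := fun n => by simp only [hfdef]; positivity
    have hnegsum : Summable (fun n : ℕ => f (k - 1 - (n:ℤ))) :=
      Summable.of_nonneg_of_le hnegnn hneg_ptwise hmajsum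
    have hnegts : ∑' n : ℕ, f (k-1-(n:ℤ)) ≤ π^2/(2*c*g) + ((2*(K:ℝ)+1)/T^2 + 1/(c*T)) := by
      calc ∑' n : ℕ, f (k-1-(n:ℤ)) ≤ ∑' n : ℕ, (q n + (w1 n + v n)) :=
            Summable.tsum_le_tsum hneg_ptwise hnegsum hmajsum
        _ = (∑' n, q n) + ((∑' n, w1 n) + (∑' n, v n)) := by
            rw [Summable.tsum_add hqsum (hw1sum.add hvsum), Summable.tsum_add hw1sum hvsum]
        _ ≤ π^2/(2*c*g) + ((2*(K:ℝ)+1)/T^2 + 1/(c*T)) := by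
            apply add_le_add hqts (add_le_add hw1ts hvts)
    -- positive side
    have hpos_ptwise : ∀ n : ℕ, f ((n:ℤ) + k) ≤ q n := by
      intro n
      have hdist := hright n
      have h0 : (0:ℝ) < g/2 + (n:ℝ)*c := by positivity
      have heq : ((n:ℤ) + k) = k + (n:ℤ) := by ring
      rw [heq]
      simp only [hfdef, hqdef]
      exact inv_sq_le_inv_sq h0 hdist
    have hposnn : ∀ n : ℕ, 0 ≤ f ((n:ℤ)+k) := fun n => by simp only [hfdef]; positivity
    have hpossum : Summable (fun n : ℕ => f ((n:ℤ) + k)) :=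
      Summable.of_nonneg_of_le hposnn hpos_ptwise hqsum
    have hposts : ∑' n : ℕ, f ((n:ℤ)+k) ≤ π^2/(2*c*g) :=
      le_trans (Summable.tsum_le_tsum hpos_ptwise hpossum hqsum) hqts
    -- assemble over ℤ
    set F : ℤ → ℝ := fun n => f (n + k) with hFdef
    have hFnegeq : (fun n : ℕ => F (-((n:ℤ)+1))) = fun n : ℕ => f (k - 1 - (n:ℤ)) := by
      funext n
      simp only [hFdef]
      congr 1
      ring
    have hFpossum : Summable (fun n : ℕ => F (n:ℤ)) := hpossum
    have hFnegsum : Summable (fun n : ℕ => F (-((n:ℤ)+1))) := by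
      rw [hFnegeq]; exact hnegsum
    have hFsum : Summable F := Summable.of_nat_of_neg_add_one hFpossum hFnegsum
    have hFts : ∑' n : ℤ, F n = (∑' n : ℕ, F (n:ℤ)) + ∑' n : ℕ, F (-((n:ℤ)+1)) :=
      tsum_of_nat_of_neg_add_one hFpossum hFnegsum
    have hfsum : Summable f := by
      have : Summable (f ∘ (Equiv.addRight k)) := hFsum
      exact (Equiv.addRight k).summable_iff.mp this
    have hfts : ∑' j : ℤ, f j = ∑' n : ℤ, F n := ((Equiv.addRight k).tsum_eq f).symm
    have happ : A ≤ C^2 * ∑' j : ℤ, f j := hA' t htne hfsum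
    -- final numeric estimates
    have hKR : (0:ℝ) ≤ (K:ℝ) := by exact_mod_cast hK
    have hMs : Real.sqrt ((2*(K:ℝ)+2)*(2*C^2)/ε) ≤ M := le_trans (le_max_left _ _) (le_max_right _ _)
    have hMc : 2*C^2/(ε*c) ≤ M := le_trans (le_max_right _ _) (le_max_right _ _)
    have hXnn : (0:ℝ) ≤ (2*(K:ℝ)+2)*(2*C^2)/ε := by positivity
    have hT2 : (2*(K:ℝ)+2)*(2*C^2)/ε ≤ T^2 := by
      calc (2*(K:ℝ)+2)*(2*C^2)/ε = Real.sqrt ((2*(K:ℝ)+2)*(2*C^2)/ε)^2 := (Real.sq_sqrt hXnn).symm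
        _ ≤ M^2 := pow_le_pow_left₀ (Real.sqrt_nonneg _) hMs 2
        _ ≤ T^2 := pow_le_pow_left₀ hM0.le hTM 2
    have e1 : (2*(K:ℝ)+1)/T^2 ≤ ε/(2*C^2) := by
      rw [div_le_div_iff₀ (by positivity) (by positivity)]
      have h10 : (2*(K:ℝ)+2)*(2*C^2) ≤ T^2 * ε := (div_le_iff₀ hε).mp hT2
      nlinarith [sq_nonneg C]
    have e2 : 1/(c*T) ≤ ε/(2*C^2) := by
      rw [div_le_div_iff₀ (by positivity) (by positivity)]
      have h11 : 2*C^2/(ε*c) ≤ T := le_trans hMc hTM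
      have h12 : 2*C^2 ≤ T*(ε*c) := (div_le_iff₀ (by positivity : (0:ℝ) < ε*c)).mp h11
      nlinarith
    have hcg_cd : π^2/(2*c*g) + π^2/(2*c*g) ≤ π^2/(c*d) := by
      have hcomb : π^2/(2*c*g) + π^2/(2*c*g) = π^2/(c*g) := by
        field_simp
        ring
      rw [hcomb]
      apply div_le_div_of_nonneg_left (by positivity) (by positivity)
      nlinarith
    calc A ≤ C^2 * ∑' j : ℤ, f j := happ
      _ = C^2 * ((∑' n : ℕ, f ((n:ℤ)+k)) + ∑' n : ℕ, f (k-1-(n:ℤ))) := by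
          rw [hfts, hFts, hFnegeq]
      _ ≤ C^2 * ((π^2/(2*c*g)) + (π^2/(2*c*g) + ((2*(K:ℝ)+1)/T^2 + 1/(c*T)))) := by
          apply mul_le_mul_of_nonneg_left _ (by positivity)
          exact add_le_add hposts hnegts
      _ = C^2 * (π^2/(2*c*g) + π^2/(2*c*g)) + C^2 * ((2*(K:ℝ)+1)/T^2 + 1/(c*T)) := by ring
      _ ≤ C^2 * (π^2/(c*d)) + C^2 * (ε/(2*C^2) + ε/(2*C^2)) := by
          apply add_le_add
          · exact mul_le_mul_of_nonneg_left hcg_cd (by positivity)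
          · exact mul_le_mul_of_nonneg_left (add_le_add e1 e2) (by positivity)
      _ = C^2 * (π^2/(c*d)) + ε := by
          congr 1
          field_simp
          ring
  have hA2 : A ≤ C^2 * (π^2/(c*d)) := le_of_forall_pos_le_add key
  calc A*(c*d) ≤ (C^2 * (π^2/(c*d)))*(c*d) := by
        apply mul_le_mul_of_nonneg_right hA2 (by positivity)
    _ = C^2*π^2 := by field_simp

lemma frame_to_A (μ : Measure ℝ) [IsProbabilityMeasure μ] {C A : ℝ} (hC : 0 < C)
    (hdecay : ∀ ξ : ℝ, ξ ≠ 0 → ‖muHat μ ξ‖ ≤ C * |ξ|⁻¹)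
    (lam : ℤ → ℝ)
    (hframe : ∀ f : ℝ → ℂ, MemLp f 2 μ →
      A * ∫ x, ‖f x‖ ^ 2 ∂μ ≤
        ∑' k : ℤ, ‖∫ x, f x * Complex.exp ((-2 * π * lam k * x : ℝ) * Complex.I) ∂μ‖ ^ 2)
    (t : ℝ) (htne : ∀ j : ℤ, lam j ≠ t)
    (hsum : Summable (fun j : ℤ => 1/(lam j - t)^2)) :
    A ≤ C^2 * ∑' j : ℤ, 1/(lam j - t)^2 := by
  set f : ℝ → ℂ := fun x => Complex.exp ((2*π*t*x : ℝ) * Complex.I) with hfdef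
  have hfc : Continuous f := by
    apply Complex.continuous_exp.comp
    fun_prop
  have hfm : AEStronglyMeasurable f μ := hfc.aestronglyMeasurable
  have hfnorm : ∀ x, ‖f x‖ = 1 := fun x => Complex.norm_exp_ofReal_mul_I _
  have hfL2 : MemLp f 2 μ :=
    MemLp.of_bound hfm 1 (Eventually.of_forall (fun x => (hfnorm x).le))
  have hint : ∫ x, ‖f x‖^2 ∂μ = 1 := by
    have : ∫ x, ‖f x‖^2 ∂μ = ∫ _x, (1:ℝ) ∂μ := by
      apply integral_congr_ae
      filter_upwards with x
      rw [hfnorm, one_pow]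
    rw [this]
    simp
  have hinner : ∀ k : ℤ, (∫ x, f x * Complex.exp ((-2 * π * lam k * x : ℝ) * Complex.I) ∂μ)
      = muHat μ (lam k - t) := by
    intro k
    unfold muHat
    apply integral_congr_ae
    filter_upwards with x
    rw [hfdef]
    rw [← Complex.exp_add]
    congr 1
    push_cast
    ring
  have hBound := hframe f hfL2
  rw [hint, mul_one] at hBound
  have hterm : ∀ k : ℤ, ‖muHat μ (lam k - t)‖^2 ≤ C^2 * (1/(lam k - t)^2) := by
    intro k
    have hne : lam k - t ≠ 0 := sub_ne_zero.mpr (htne k)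
    have h1 := hdecay _ hne
    have h2 : ‖muHat μ (lam k - t)‖^2 ≤ (C*|lam k - t|⁻¹)^2 :=
      pow_le_pow_left₀ (norm_nonneg _) h1 2
    calc ‖muHat μ (lam k - t)‖^2 ≤ (C*|lam k - t|⁻¹)^2 := h2
      _ = C^2 * (1/(lam k - t)^2) := by
          rw [mul_pow, inv_pow, sq_abs, one_div]
  have hCsum : Summable (fun k : ℤ => C^2*(1/(lam k - t)^2)) := hsum.mul_left _
  have hLsum : Summable (fun k : ℤ => ‖muHat μ (lam k - t)‖^2) :=
    Summable.of_nonneg_of_le (fun k => by positivity) hterm hCsum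
  calc A ≤ ∑' k : ℤ, ‖∫ x, f x * Complex.exp ((-2 * π * lam k * x : ℝ) * Complex.I) ∂μ‖^2 := hBound
    _ = ∑' k : ℤ, ‖muHat μ (lam k - t)‖^2 := tsum_congr (fun k => by rw [hinner k])
    _ ≤ ∑' k : ℤ, C^2*(1/(lam k - t)^2) := Summable.tsum_le_tsum hterm hLsum hCsum
    _ = C^2 * ∑' j : ℤ, 1/(lam j - t)^2 := tsum_mul_left


theorem stmt0 (μ : Measure ℝ) [IsProbabilityMeasure μ]
    (C : ℝ) (hC : 0 < C)
    (hdecay : ∀ ξ : ℝ, ξ ≠ 0 → ‖muHat μ ξ‖ ≤ C * |ξ|⁻¹)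
    (lam : ℤ → ℝ) (hmono : StrictMono lam)
    (A : ℝ) (hA : 0 < A)
    (hframe : ∀ f : ℝ → ℂ, MemLp f 2 μ →
      A * ∫ x, ‖f x‖ ^ 2 ∂μ ≤
        ∑' k : ℤ, ‖∫ x, f x * Complex.exp ((-2 * π * lam k * x : ℝ) * Complex.I) ∂μ‖ ^ 2) :
    gmin lam * gmax lam ≤ C ^ 2 * π ^ 2 / A := by
  by_contra hcon
  push_neg at hcon
  have hpi := Real.pi_pos
  have hB : 0 < C ^ 2 * π ^ 2 / A := by positivity
  have hprod : 0 < gmin lam * gmax lam := lt_trans hB hcon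
  have hgmin0 : 0 ≤ gmin lam := by
    apply Real.sInf_nonneg
    exact fun x hx => hx.1
  have hgmax0 : 0 ≤ gmax lam := by
    apply Real.sSup_nonneg
    exact fun x hx => hx.1
  have hgminpos : 0 < gmin lam := by
    rcases eq_or_lt_of_le hgmin0 with h | h
    · rw [← h] at hprod; simp at hprod
    · exact h
  have hgmaxpos : 0 < gmax lam := by
    rcases eq_or_lt_of_le hgmax0 with h | h
    · rw [← h] at hprod; simp at hprod
    · exact h
  -- pick c, d
  set B := C ^ 2 * π ^ 2 / A with hBdef
  set P := gmin lam * gmax lam with hPdef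
  set s : ℝ := Real.sqrt ((B/P+1)/2) with hsdef
  have hBP : B/P < 1 := (div_lt_one hprod).mpr hcon
  have hBP0 : 0 < B/P := div_pos hB hprod
  have hs2 : s^2 = (B/P+1)/2 := Real.sq_sqrt (by linarith)
  have hs0 : 0 < s := Real.sqrt_pos.mpr (by linarith)
  have hs1 : s < 1 := by
    rw [show (1:ℝ) = Real.sqrt 1 by rw [Real.sqrt_one]]
    apply Real.sqrt_lt_sqrt (by linarith)
    linarith
  set c := s * gmin lam with hcdef
  set d := s * gmax lam with hddef
  have hc0 : 0 < c := mul_pos hs0 hgminpos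
  have hd0 : 0 < d := mul_pos hs0 hgmaxpos
  have hclt : c < gmin lam := by nlinarith
  have hdlt : d < gmax lam := by nlinarith
  have hcdB : B < c * d := by
    have : c * d = s^2 * P := by rw [hcdef, hddef, hPdef]; ring
    rw [this, hs2]
    have h1 : B/P < (B/P+1)/2 := by linarith
    calc B = (B/P)*P := by field_simp
      _ < ((B/P+1)/2)*P := mul_lt_mul_of_pos_right h1 hprod
  -- finite small-gap set
  have hSc : {m : ℤ | lam m - lam (m-1) < c}.Finite := by
    by_contra hinf
    have hinf' : {m : ℤ | lam m - lam (m-1) < c}.Infinite := hinf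
    have hmem : c ∈ {x : ℝ | 0 ≤ x ∧ {k : ℤ | lam k - lam (k - 1) < x}.Infinite} := ⟨hc0.le, hinf'⟩
    have : gmin lam ≤ c := csInf_le ⟨0, fun x hx => hx.1⟩ hmem
    linarith
  obtain ⟨U, hU⟩ : BddAbove {m : ℤ | lam m - lam (m-1) < c} := hSc.bddAbove
  obtain ⟨L, hL⟩ : BddBelow {m : ℤ | lam m - lam (m-1) < c} := hSc.bddBelow
  set K : ℤ := |U| + |L| with hKdef
  have hKnn : 0 ≤ K := by positivity
  have hreg : ∀ m : ℤ, K < |m| → c ≤ lam m - lam (m-1) := by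
    intro m hm
    by_contra hlt
    push_neg at hlt
    have h1 : m ≤ U := hU hlt
    have h2 : L ≤ m := hL hlt
    have := le_abs_self U
    have := neg_abs_le L
    have := abs_nonneg U
    have := abs_nonneg L
    have habs : |m| ≤ K := by
      rw [hKdef]
      rcases abs_cases m with ⟨he, _⟩ | ⟨he, _⟩ <;> omega
    omega
  -- infinite big-gap set
  have hSd : {m : ℤ | d < lam m - lam (m-1)}.Infinite := by
    have hlt : d < gmax lam := hdlt
    rcases Set.eq_empty_or_nonempty {x : ℝ | 0 ≤ x ∧ {k : ℤ | x < lam k - lam (k - 1)}.Infinite} with he | hne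
    · exfalso
      have : gmax lam = 0 := by unfold gmax; rw [he, Real.sSup_empty]
      rw [this] at hlt
      linarith
    · obtain ⟨x, hxmem, hdx⟩ := exists_lt_of_lt_csSup hne hlt
      apply hxmem.2.mono
      intro m hm
      simp only [Set.mem_setOf_eq] at hm ⊢
      linarith
  -- frame inequality in the needed form
  have hA' : ∀ t : ℝ, (∀ j, lam j ≠ t) → Summable (fun j : ℤ => 1/(lam j - t)^2) →
      A ≤ C^2 * ∑' j : ℤ, 1/(lam j - t)^2 :=
    fun t h1 h2 => frame_to_A μ hC hdecay lam hframe t h1 h2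
  -- contradiction machinery
  have hfinal : A * (c * d) ≤ C^2 * π^2 := by
    by_cases hba : BddAbove {m : ℤ | d < lam m - lam (m-1)}
    · -- reflected case: unbounded below
      have hbb : ¬ BddBelow {m : ℤ | d < lam m - lam (m-1)} := by
        intro hbb
        obtain ⟨U2, hU2⟩ := hba
        obtain ⟨L2, hL2⟩ := hbb
        exact hSd ((Set.finite_Icc L2 U2).subset (fun m hm => Set.mem_Icc.mpr ⟨hL2 hm, hU2 hm⟩))
      set lam2 : ℤ → ℝ := fun j => -lam (-j) with hlam2def
      have hmono2 : StrictMono lam2 := by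
        intro i j hij
        simp only [hlam2def]
        have : lam (-j) < lam (-i) := hmono (by omega)
        linarith
      have hgap2 : ∀ m : ℤ, lam2 m - lam2 (m-1) = lam (1-m) - lam ((1-m)-1) := by
        intro m
        simp only [hlam2def]
        rw [show -(m-1) = 1-m by ring, show (1-m)-1 = -m by ring]
        ring
      have hreg2 : ∀ m : ℤ, K+1 < |m| → c ≤ lam2 m - lam2 (m-1) := by
        intro m hm
        rw [hgap2]
        apply hreg
        simp only [Int.abs_eq_natAbs] at hm ⊢
        omega
      have hbig2 : ∀ N : ℤ, ∃ k : ℤ, N < k ∧ d < lam2 k - lam2 (k-1) := by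
        intro N
        rw [not_bddBelow_iff] at hbb
        obtain ⟨y, hy, hyN⟩ := hbb (1 - N)
        refine ⟨1 - y, by omega, ?_⟩
        rw [hgap2, show 1-(1-y) = y by ring]
        exact hy
      have hA2' : ∀ t : ℝ, (∀ j, lam2 j ≠ t) → Summable (fun j : ℤ => 1/(lam2 j - t)^2) →
          A ≤ C^2 * ∑' j : ℤ, 1/(lam2 j - t)^2 := by
        intro t h1 h2
        have h1' : ∀ j : ℤ, lam j ≠ -t := by
          intro j hj
          apply h1 (-j)
          simp only [hlam2def, neg_neg, hj]
        have heq : ∀ j : ℤ, 1/(lam2 j - t)^2 = 1/(lam (-j) - (-t))^2 := by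
          intro j
          have he3 : lam2 j - t = -(lam (-j) - (-t)) := by simp only [hlam2def]; ring
          rw [he3, neg_sq]
        have h2' : Summable (fun j : ℤ => 1/(lam j - (-t))^2) := by
          apply ((Equiv.neg ℤ).summable_iff (f := fun j : ℤ => 1/(lam j - (-t))^2)).mp
          exact h2.congr (fun j => heq j)
        have hts : ∑' j : ℤ, 1/(lam2 j - t)^2 = ∑' j : ℤ, 1/(lam j - (-t))^2 := by
          rw [tsum_congr heq]
          exact (Equiv.neg ℤ).tsum_eq (fun j : ℤ => 1/(lam j - (-t))^2)
        rw [hts]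
        exact hA' (-t) h1' h2'
      exact sumbound lam2 hmono2 hA hC hc0 hd0 (K+1) (by omega) hreg2 hbig2 hA2'
    · rw [not_bddAbove_iff] at hba
      have hbig : ∀ N : ℤ, ∃ k : ℤ, N < k ∧ d < lam k - lam (k-1) := by
        intro N
        obtain ⟨y, hy, hNy⟩ := hba N
        exact ⟨y, hNy, hy⟩
      exact sumbound lam hmono hA hC hc0 hd0 K hKnn hreg hbig hA'
  have : C^2*π^2 < A * (c*d) := by
    have : A * B = C^2*π^2 := by rw [hBdef]; field_simp
    nlinarith
  linarith
end

section
/- Let μ be a Borel probability measure on ℝ and suppose there exists C > 0 such that |μ̂(ξ)| ≤ C|ξ|^{-1} for all ξ ∈ ℝ \ {0}. If a countable set Λ ⊂ ℝ, enumerated in increasing order as Λ = {λ_k : k ∈ ℤ}, satisfies ∑_{λ∈Λ} |∫ f(x) e^{-2πiλx} dμ(x)|² ≥ A ∫ |f(x)|² dμ(x) for all f ∈ L²(μ) with A > 3/2, then g_min(Λ)² ≤ C²π²/(3(A−1)). -/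
open MeasureTheory Filter Set
open scoped Real
open scoped Topology

/-- The Basel series term `1/n²`. -/
noncomputable def uu (n : ℕ) : ℝ := 1 / (n : ℝ) ^ 2

lemma uu_nonneg (n : ℕ) : 0 ≤ uu n := by unfold uu; positivity

lemma hasSum_uu : HasSum uu (π ^ 2 / 6) := hasSum_zeta_two

lemma hasSum_uu_succ : HasSum (fun n => uu (n + 1)) (π ^ 2 / 6) := by
  refine (hasSum_nat_add_iff 1).mpr ?_
  have h0 : uu 0 = 0 := by simp [uu]
  simpa [h0] using hasSum_uu

lemma norm_muHat_le_one (μ : Measure ℝ) [IsProbabilityMeasure μ] (ξ : ℝ) :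
    ‖muHat μ ξ‖ ≤ 1 := by
  have h := norm_integral_le_integral_norm (μ := μ)
    (f := fun x => Complex.exp ((-2 * π * ξ * x : ℝ) * Complex.I))
  calc ‖muHat μ ξ‖ ≤ ∫ x, ‖Complex.exp ((-2 * π * ξ * x : ℝ) * Complex.I)‖ ∂μ := h
    _ = 1 := by simp [Complex.norm_exp, Complex.mul_re]

theorem stmt1 (μ : Measure ℝ) [IsProbabilityMeasure μ]
    (C : ℝ) (hC : 0 < C)
    (hdecay : ∀ ξ : ℝ, ξ ≠ 0 → ‖muHat μ ξ‖ ≤ C * |ξ|⁻¹)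
    (lam : ℤ → ℝ) (hmono : StrictMono lam)
    (A : ℝ) (hA : 3 / 2 < A)
    (hframe : ∀ f : ℝ → ℂ, MemLp f 2 μ →
      A * ∫ x, ‖f x‖ ^ 2 ∂μ ≤
        ∑' k : ℤ, ‖∫ x, f x * Complex.exp ((-2 * π * lam k * x : ℝ) * Complex.I) ∂μ‖ ^ 2) :
    gmin lam ^ 2 ≤ C ^ 2 * π ^ 2 / (3 * (A - 1)) := by
  have hA1 : (0:ℝ) < A - 1 := by linarith
  set B : ℝ := C ^ 2 * π ^ 2 / (3 * (A - 1)) with hBdef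
  have hpi : (0:ℝ) < π := Real.pi_pos
  have hBpos : 0 < B := by rw [hBdef]; positivity
  -- Main claim: any c with B < c² has infinitely many gaps below it.
  have main : ∀ c : ℝ, 0 < c → B < c ^ 2 →
      {k : ℤ | lam k - lam (k - 1) < c}.Infinite := by
    intro c hc hBc
    by_contra hfin
    rw [Set.not_infinite] at hfin
    obtain ⟨b, hb⟩ := hfin.bddAbove
    obtain ⟨b', hb'⟩ := hfin.bddBelow
    set K : ℤ := max 1 (max b (1 - b')) with hKdef
    have hK1 : (1:ℤ) ≤ K := le_max_left _ _
    have hgap : ∀ j : ℤ, (K < j ∨ j ≤ -K) → c ≤ lam j - lam (j - 1) := by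
      intro j hj
      by_contra hlt
      push_neg at hlt
      have hjmem : j ∈ {k : ℤ | lam k - lam (k - 1) < c} := hlt
      have h1 := hb hjmem
      have h2 := hb' hjmem
      have hKb : b ≤ K := le_trans (le_max_left _ _) (le_max_right _ _)
      have hKb' : 1 - b' ≤ K := le_trans (le_max_right _ _) (le_max_right _ _)
      omega
    -- upward gap accumulation
    have up : ∀ j : ℤ, K ≤ j → ∀ m : ℕ, c * m ≤ lam (j + m) - lam j := by
      intro j hj m
      induction m with
      | zero => simp
      | succ m ih =>
        have hg : c ≤ lam (j + m + 1) - lam (j + m) := by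
          have h := hgap (j + m + 1) (Or.inl (by omega))
          have : (j + (m:ℤ) + 1) - 1 = j + m := by ring
          rwa [this] at h
        have hcast : (j + ((m:ℕ)+1:ℕ) : ℤ) = j + (m:ℤ) + 1 := by push_cast; ring
        rw [hcast]
        push_cast
        linarith
    -- downward gap accumulation from -K
    have down : ∀ m : ℕ, c * m ≤ lam (-K) - lam (-K - m) := by
      intro m
      induction m with
      | zero => simp
      | succ m ih =>
        have hg : c ≤ lam (-K - m) - lam (-K - m - 1) := by
          exact hgap (-K - m) (Or.inr (by omega))
        have hcast : (-K - ((m:ℕ)+1:ℕ) : ℤ) = -K - (m:ℤ) - 1 := by push_cast; ring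
        rw [hcast]
        push_cast
        linarith
    set q : ℝ := C ^ 2 / c ^ 2 with hqdef
    have hq : 0 ≤ q := by positivity
    -- For each n : ℕ, apply the frame inequality with frequency lam (K + n + 1).
    have key : ∀ n : ℕ, A ≤ 1 + q * (π ^ 2 / 6) + q * (π ^ 2 / 6)
        + (2 * (K:ℝ)) * (q * uu (n + 1)) + q * ∑' m : ℕ, uu (m + (n + 2)) := by
      intro n
      set d : ℕ := n + 1 with hddef
      set kk : ℤ := K + (d:ℤ) with hkkdef
      set a : ℝ := lam kk with hadef
      set f : ℝ → ℂ := fun x => Complex.exp ((2 * π * a * x : ℝ) * Complex.I) with hfdef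
      have hmem : MemLp f 2 μ := by
        have hcont : Continuous f := by
          rw [hfdef]; fun_prop
        have h1 : MemLp f ⊤ μ :=
          memLp_top_of_bound hcont.aestronglyMeasurable 1
            (Filter.Eventually.of_forall fun x => by
              simp [hfdef, Complex.norm_exp, Complex.mul_re])
        exact h1.mono_exponent le_top
      have hint : ∫ x, ‖f x‖ ^ 2 ∂μ = 1 := by
        simp [hfdef, Complex.norm_exp, Complex.mul_re]
      set F : ℤ → ℝ := fun j => ‖muHat μ (lam j - a)‖ ^ 2 with hFdef
      have hF0 : ∀ j, 0 ≤ F j := fun j => by positivity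
      -- frame inequality gives A ≤ ∑' j, F j
      have hAF : A ≤ ∑' j, F j := by
        have h := hframe f hmem
        rw [hint, mul_one] at h
        have he : ∀ j : ℤ, ‖∫ x, f x * Complex.exp ((-2 * π * lam j * x : ℝ) * Complex.I) ∂μ‖ ^ 2
            = F j := by
          intro j
          have hcoeff : ∫ x, f x * Complex.exp ((-2 * π * lam j * x : ℝ) * Complex.I) ∂μ
              = muHat μ (lam j - a) := by
            unfold muHat
            congr 1
            funext x
            rw [hfdef]
            show Complex.exp _ * Complex.exp _ = _
            rw [← Complex.exp_add]
            congr 1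
            push_cast
            ring
          rw [hcoeff]
        calc A ≤ ∑' j : ℤ, ‖∫ x, f x *
              Complex.exp ((-2 * π * lam j * x : ℝ) * Complex.I) ∂μ‖ ^ 2 := h
          _ = ∑' j, F j := tsum_congr he
      -- basic bound on F
      have hFle : ∀ (j : ℤ) (m : ℕ), 1 ≤ m → c * m ≤ |lam j - a| → F j ≤ q * uu m := by
        intro j m hm hdist
        have hm1 : (1:ℝ) ≤ (m:ℝ) := by exact_mod_cast hm
        have hmpos : (0:ℝ) < c * m := by positivity
        have hne : lam j - a ≠ 0 := by
          intro h
          rw [h, abs_zero] at hdist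
          linarith
        have h1 : ‖muHat μ (lam j - a)‖ ≤ C * |lam j - a|⁻¹ := hdecay _ hne
        have h2 : C * |lam j - a|⁻¹ ≤ C * (c * m)⁻¹ :=
          mul_le_mul_of_nonneg_left (inv_anti₀ hmpos hdist) hC.le
        have h3 : ‖muHat μ (lam j - a)‖ ^ 2 ≤ (C * (c * m)⁻¹) ^ 2 :=
          pow_le_pow_left₀ (norm_nonneg _) (h1.trans h2) 2
        calc F j ≤ (C * (c * m)⁻¹) ^ 2 := h3
          _ = q * uu m := by
            rw [hqdef]; unfold uu
            field_simp
      -- the majorant functions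
      set G0 : ℤ → ℝ := fun j => if j = kk then (1:ℝ) else 0 with hG0def
      set G1 : ℤ → ℝ := fun j => if kk < j then q * uu (j - kk).toNat else 0 with hG1def
      set G2 : ℤ → ℝ := fun j => if K ≤ j ∧ j < kk then q * uu (kk - j).toNat else 0 with hG2def
      set G3 : ℤ → ℝ := fun j => if -K ≤ j ∧ j < K then q * uu d else 0 with hG3def
      set G4 : ℤ → ℝ := fun j => if j < -K then q * uu (d + (-K - j).toNat) else 0 with hG4def
      have hG0sum : HasSum G0 1 := hasSum_ite_eq kk 1
      have hquusum : HasSum (fun m : ℕ => q * uu (m + 1)) (q * (π ^ 2 / 6)) :=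
        hasSum_uu_succ.mul_left q
      -- G1
      have hG1sum : HasSum G1 (q * (π ^ 2 / 6)) := by
        have hi : Function.Injective (fun m : ℕ => kk + 1 + m) := by
          intro x y h
          simpa using h
        have hsupp : ∀ x ∉ Set.range (fun m : ℕ => kk + 1 + m), G1 x = 0 := by
          intro x hx
          rw [hG1def]
          simp only
          rw [if_neg]
          intro hlt
          exact hx ⟨(x - kk - 1).toNat, by simp; omega⟩
        refine (hi.hasSum_iff hsupp).mp ?_
        have : (G1 ∘ fun m : ℕ => kk + 1 + m) = fun m : ℕ => q * uu (m + 1) := by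
          funext m
          show G1 (kk + 1 + m) = _
          rw [hG1def]
          simp only
          rw [if_pos (by omega)]
          congr 2
          omega
        rw [this]
        exact hquusum
      -- G2
      have hG2comp : ∀ m : ℕ, G2 (kk - 1 - m) = if K ≤ kk - 1 - (m:ℤ) then q * uu (m + 1) else 0 := by
        intro m
        rw [hG2def]
        simp only
        by_cases h : K ≤ kk - 1 - (m:ℤ)
        · rw [if_pos ⟨h, by omega⟩, if_pos h]
          congr 2
          omega
        · rw [if_neg (by tauto), if_neg h]
      have hi2 : Function.Injective (fun m : ℕ => kk - 1 - m) := by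
        intro x y h
        simp only at h
        omega
      have hsupp2 : ∀ x ∉ Set.range (fun m : ℕ => kk - 1 - m), G2 x = 0 := by
        intro x hx
        rw [hG2def]
        simp only
        rw [if_neg]
        rintro ⟨-, hlt⟩
        exact hx ⟨(kk - 1 - x).toNat, by simp; omega⟩
      have hG2cle : ∀ m : ℕ, (G2 ∘ fun m : ℕ => kk - 1 - m) m ≤ q * uu (m + 1) := by
        intro m
        show G2 (kk - 1 - m) ≤ _
        rw [hG2comp]
        split
        · exact le_rfl
        · exact mul_nonneg hq (uu_nonneg _)
      have hG2c0 : ∀ m : ℕ, 0 ≤ (G2 ∘ fun m : ℕ => kk - 1 - m) m := by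
        intro m
        show 0 ≤ G2 (kk - 1 - m)
        rw [hG2comp]
        split
        · exact mul_nonneg hq (uu_nonneg _)
        · exact le_rfl
      have hG2csum : Summable (G2 ∘ fun m : ℕ => kk - 1 - m) :=
        hquusum.summable.of_nonneg_of_le hG2c0 hG2cle
      have hG2summ : Summable G2 := (hi2.summable_iff hsupp2).mp hG2csum
      have hG2le : ∑' j, G2 j ≤ q * (π ^ 2 / 6) := by
        rw [← hi2.tsum_eq (Function.support_subset_iff'.mpr hsupp2)]
        calc ∑' m : ℕ, G2 (kk - 1 - m) ≤ ∑' m : ℕ, q * uu (m + 1) :=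
              Summable.tsum_le_tsum hG2cle hG2csum hquusum.summable
          _ = q * (π ^ 2 / 6) := hquusum.tsum_eq
      -- G3
      have hsupp3 : ∀ x ∉ Finset.Ico (-K) K, G3 x = 0 := by
        intro x hx
        rw [hG3def]
        simp only
        rw [if_neg]
        rintro ⟨h1, h2⟩
        exact hx (Finset.mem_Ico.mpr ⟨h1, h2⟩)
      have hG3summ : Summable G3 := summable_of_ne_finset_zero hsupp3
      have hG3le : ∑' j, G3 j ≤ (2 * (K:ℝ)) * (q * uu d) := by
        rw [tsum_eq_sum hsupp3]
        have hcard : (Finset.Ico (-K) K).card = (2*K).toNat := by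
          rw [Int.card_Ico]; omega
        calc ∑ j ∈ Finset.Ico (-K) K, G3 j
            ≤ (Finset.Ico (-K) K).card • (q * uu d) := by
              refine Finset.sum_le_card_nsmul _ _ _ (fun x _ => ?_)
              rw [hG3def]
              simp only
              split
              · exact le_rfl
              · exact mul_nonneg hq (uu_nonneg _)
          _ = ((2*K).toNat : ℝ) * (q * uu d) := by rw [hcard, nsmul_eq_mul]
          _ = (2 * (K:ℝ)) * (q * uu d) := by
              congr 1
              have h2K : ((2*K).toNat : ℤ) = 2*K := by omega
              exact_mod_cast h2K
      -- G4
      have hTsummable : Summable (fun m : ℕ => uu (m + (n + 2))) :=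
        (summable_nat_add_iff (n+2)).mpr hasSum_uu.summable
      have hqT : Summable (fun m : ℕ => q * uu (m + (n + 2))) := hTsummable.mul_left q
      have hi4 : Function.Injective (fun m : ℕ => -K - 1 - (m:ℤ)) := by
        intro x y h
        simp only at h
        omega
      have hsupp4 : ∀ x ∉ Set.range (fun m : ℕ => -K - 1 - (m:ℤ)), G4 x = 0 := by
        intro x hx
        rw [hG4def]
        simp only
        rw [if_neg]
        intro hlt
        exact hx ⟨(-K - 1 - x).toNat, by simp; omega⟩
      have hG4comp : ∀ m : ℕ, G4 (-K - 1 - (m:ℤ)) = q * uu (m + (n + 2)) := by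
        intro m
        rw [hG4def]
        simp only
        rw [if_pos (by omega)]
        congr 2
        omega
      have hG4summ : Summable G4 :=
        (hi4.summable_iff hsupp4).mp (hqT.congr fun m => (hG4comp m).symm)
      have hG4le : ∑' j, G4 j = q * ∑' m : ℕ, uu (m + (n + 2)) := by
        rw [← hi4.tsum_eq (Function.support_subset_iff'.mpr hsupp4)]
        calc ∑' m : ℕ, G4 (-K - 1 - (m:ℤ)) = ∑' m : ℕ, q * uu (m + (n + 2)) :=
              tsum_congr hG4comp
          _ = q * ∑' m : ℕ, uu (m + (n + 2)) := tsum_mul_left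
      -- combine
      set G : ℤ → ℝ := fun j => G0 j + G1 j + G2 j + G3 j + G4 j with hGdef
      have e01 : Summable (fun j => G0 j + G1 j) := hG0sum.summable.add hG1sum.summable
      have e012 : Summable (fun j => G0 j + G1 j + G2 j) := e01.add hG2summ
      have e0123 : Summable (fun j => G0 j + G1 j + G2 j + G3 j) := e012.add hG3summ
      have hGsumm : Summable G := e0123.add hG4summ
      have hGts : ∑' j, G j = 1 + q * (π ^ 2 / 6) + ∑' j, G2 j + ∑' j, G3 j + ∑' j, G4 j := by
        rw [hGdef]
        rw [Summable.tsum_add e0123 hG4summ, Summable.tsum_add e012 hG3summ, Summable.tsum_add e01 hG2summ,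
          Summable.tsum_add hG0sum.summable hG1sum.summable, hG0sum.tsum_eq, hG1sum.tsum_eq]
      -- pointwise bound F ≤ G
      have hg0n : ∀ j, 0 ≤ G0 j := by
        intro j; rw [hG0def]; dsimp only; split <;> norm_num
      have hg1n : ∀ j, 0 ≤ G1 j := by
        intro j; rw [hG1def]; dsimp only; split
        · exact mul_nonneg hq (uu_nonneg _)
        · exact le_rfl
      have hg2n : ∀ j, 0 ≤ G2 j := by
        intro j; rw [hG2def]; dsimp only; split
        · exact mul_nonneg hq (uu_nonneg _)
        · exact le_rfl
      have hg3n : ∀ j, 0 ≤ G3 j := by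
        intro j; rw [hG3def]; dsimp only; split
        · exact mul_nonneg hq (uu_nonneg _)
        · exact le_rfl
      have hg4n : ∀ j, 0 ≤ G4 j := by
        intro j; rw [hG4def]; dsimp only; split
        · exact mul_nonneg hq (uu_nonneg _)
        · exact le_rfl
      have hKkk : K ≤ kk := by omega
      have hdK : c * (d:ℝ) ≤ lam kk - lam K := by
        have h := up K le_rfl d
        rwa [← hkkdef] at h
      have hFG : ∀ j, F j ≤ G j := by
        intro j
        have hGj : G j = G0 j + G1 j + G2 j + G3 j + G4 j := rfl
        rcases lt_trichotomy j kk with hj | hj | hj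
        · rcases le_or_gt K j with hKj | hjK
          · -- G2 region
            have hm : 1 ≤ (kk - j).toNat := by omega
            have hup := up j hKj (kk - j).toNat
            have hjm : j + ((kk - j).toNat : ℤ) = kk := by omega
            rw [hjm] at hup
            have habs : |lam j - a| = lam kk - lam j := by
              rw [hadef, abs_sub_comm,
                abs_of_nonneg (sub_nonneg.mpr (hmono.monotone hj.le))]
            have hle := hFle j _ hm (by rw [habs]; exact hup)
            have hG2j : G2 j = q * uu (kk - j).toNat := by
              rw [hG2def]; exact if_pos ⟨hKj, hj⟩
            rw [hGj]
            linarith [hg0n j, hg1n j, hg3n j, hg4n j, hG2j ▸ hle]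
          · rcases le_or_gt (-K) j with hKj' | hjK'
            · -- G3 region
              have hjK2 : j < K := by omega
              have hlamjK : lam j ≤ lam K := hmono.monotone hjK2.le
              have hm : 1 ≤ d := by omega
              have habs : |lam j - a| = lam kk - lam j := by
                rw [hadef, abs_sub_comm,
                  abs_of_nonneg (sub_nonneg.mpr (hmono.monotone hj.le))]
              have hle := hFle j d hm (by rw [habs]; linarith)
              have hG3j : G3 j = q * uu d := by
                rw [hG3def]; exact if_pos ⟨hKj', hjK2⟩
              rw [hGj]
              linarith [hg0n j, hg1n j, hg2n j, hg4n j, hG3j ▸ hle]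
            · -- G4 region
              set m : ℕ := (-K - j).toNat with hmdef
              have hm1 : 1 ≤ m := by omega
              have hdown := down m
              have hjm : -K - (m:ℤ) = j := by omega
              rw [hjm] at hdown
              have hlamK : lam (-K) ≤ lam K := hmono.monotone (by omega)
              have habs : |lam j - a| = lam kk - lam j := by
                rw [hadef, abs_sub_comm,
                  abs_of_nonneg (sub_nonneg.mpr (hmono.monotone hj.le))]
              have hdm : c * ((d + m : ℕ) : ℝ) ≤ |lam j - a| := by
                rw [habs]
                have hc1 : ((d + m : ℕ) : ℝ) = (d:ℝ) + (m:ℝ) := by push_cast; ring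
                rw [hc1, mul_add]
                linarith
              have hle := hFle j (d + m) (by omega) hdm
              have hG4j : G4 j = q * uu (d + m) := by
                rw [hG4def]; exact if_pos hjK'
              rw [hGj]
              linarith [hg0n j, hg1n j, hg2n j, hg3n j, hG4j ▸ hle]
        · -- j = kk
          have hle : F j ≤ 1 := by
            rw [hFdef]
            exact pow_le_one₀ (norm_nonneg _) (norm_muHat_le_one μ _)
          have hG0j : G0 j = 1 := by rw [hG0def]; exact if_pos hj
          rw [hGj]
          linarith [hg1n j, hg2n j, hg3n j, hg4n j, hG0j ▸ hle]
        · -- kk < j : G1 region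
          have hm : 1 ≤ (j - kk).toNat := by omega
          have hup := up kk hKkk (j - kk).toNat
          have hjm : kk + ((j - kk).toNat : ℤ) = j := by omega
          rw [hjm] at hup
          have habs : |lam j - a| = lam j - lam kk := by
            rw [hadef, abs_of_nonneg (sub_nonneg.mpr (hmono.monotone hj.le))]
          have hle := hFle j _ hm (by rw [habs]; exact hup)
          have hG1j : G1 j = q * uu (j - kk).toNat := by
            rw [hG1def]; exact if_pos hj
          rw [hGj]
          linarith [hg0n j, hg2n j, hg3n j, hg4n j, hG1j ▸ hle]
      have hFsumm : Summable F := hGsumm.of_nonneg_of_le hF0 hFG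
      have hAG : A ≤ ∑' j, G j := hAF.trans (Summable.tsum_le_tsum hFG hFsumm hGsumm)
      rw [hGts] at hAG
      rw [hG4le] at hAG
      have hd1 : uu d = uu (n + 1) := by rw [hddef]
      linarith [hG2le, hG3le, hd1 ▸ hG3le]
    -- take the limit n → ∞
    have hTtend : Tendsto (fun n : ℕ => ∑' m : ℕ, uu (m + (n + 2))) atTop (𝓝 0) :=
      (tendsto_sum_nat_add uu).comp (tendsto_add_atTop_nat 2)
    have hutend : Tendsto (fun n : ℕ => uu (n + 1)) atTop (𝓝 0) :=
      hasSum_uu.summable.tendsto_atTop_zero.comp (tendsto_add_atTop_nat 1)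
    have hgtend : Tendsto (fun n : ℕ => 1 + q * (π ^ 2 / 6) + q * (π ^ 2 / 6)
        + (2 * (K:ℝ)) * (q * uu (n + 1)) + q * ∑' m : ℕ, uu (m + (n + 2))) atTop
        (𝓝 (1 + q * (π ^ 2 / 6) + q * (π ^ 2 / 6) + (2 * (K:ℝ)) * (q * 0) + q * 0)) := by
      exact ((tendsto_const_nhds.add
        (tendsto_const_nhds.mul (tendsto_const_nhds.mul hutend))).add
        (tendsto_const_nhds.mul hTtend))
    have hlim : A ≤ 1 + q * (π ^ 2 / 6) + q * (π ^ 2 / 6) + (2 * (K:ℝ)) * (q * 0) + q * 0 :=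
      ge_of_tendsto hgtend (Filter.Eventually.of_forall key)
    have hlim' : A - 1 ≤ q * (π ^ 2 / 3) := by
      have : q * (π ^ 2 / 6) + q * (π ^ 2 / 6) = q * (π ^ 2 / 3) := by ring
      linarith [hlim]
    have hc2 : (0:ℝ) < c ^ 2 := by positivity
    have h1 : (A - 1) * c ^ 2 ≤ C ^ 2 * π ^ 2 / 3 := by
      calc (A - 1) * c ^ 2 ≤ (q * (π ^ 2 / 3)) * c ^ 2 := by nlinarith
        _ = C ^ 2 * π ^ 2 / 3 := by rw [hqdef]; field_simp
    have h2 : C ^ 2 * π ^ 2 / 3 < (A - 1) * c ^ 2 := by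
      rw [hBdef] at hBc
      have h3 : C ^ 2 * π ^ 2 < c ^ 2 * (3 * (A - 1)) := (div_lt_iff₀ (by positivity)).mp hBc
      nlinarith
    linarith
  -- conclude
  have hB0 : 0 ≤ B := hBpos.le
  set S : Set ℝ := {c : ℝ | 0 ≤ c ∧ {k : ℤ | lam k - lam (k - 1) < c}.Infinite} with hSdef
  have hmemS : ∀ c : ℝ, Real.sqrt B < c → c ∈ S := by
    intro c hcB
    have hc : 0 < c := lt_of_le_of_lt (Real.sqrt_nonneg B) hcB
    exact ⟨hc.le, main c hc ((Real.sqrt_lt' hc).mp hcB)⟩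
  have hbdd : BddBelow S := ⟨0, fun x hx => hx.1⟩
  have hne : S.Nonempty := ⟨Real.sqrt B + 1, hmemS _ (by linarith [Real.sqrt_nonneg B])⟩
  have hgle : gmin lam ≤ Real.sqrt B := by
    unfold gmin
    refine le_of_forall_pos_le_add fun ε hε => ?_
    exact csInf_le hbdd (hmemS _ (by linarith))
  have hg0 : 0 ≤ gmin lam := le_csInf hne fun x hx => hx.1
  calc gmin lam ^ 2 ≤ Real.sqrt B ^ 2 := pow_le_pow_left₀ hg0 hgle 2
    _ = B := Real.sq_sqrt hB0
end

section
/- Let μ = g(x)dx be a Borel probability measure on ℝ whose density g satisfies |ĝ(ξ)| = O(|ξ|^{-α}) for some α > 1/2. Suppose that for every A > 0 there is a countable set Λ_A ⊂ ℝ, enumerated in increasing order, such that ∑_{λ∈Λ_A} |∫ f(x) e^{-2πiλx} dμ(x)|² ≥ A ∫ |f(x)|² dμ(x) for all f ∈ L²(μ). Then g_min(Λ_A) → 0 as A → ∞. -/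
open MeasureTheory Filter Set
open scoped Real ENNReal NNReal

private lemma lam_grow (L : ℤ → ℝ) (ε : ℝ) (i : ℤ) (n : ℕ)
    (h : ∀ l : ℤ, i < l → l ≤ i + n → ε ≤ L l - L (l - 1)) :
    L i + n * ε ≤ L (i + n) := by
  induction n with
  | zero => simp
  | succ m ih =>
    have h1 : L i + m * ε ≤ L (i + m) :=
      ih (fun l hl hl' => h l hl (by omega))
    have h2 := h (i + m + 1) (by omega) (by push_cast; omega)
    have e : (i + ((m : ℤ) + 1)) = i + m + 1 := by ring
    have e2 : L (i + m + 1 - 1) = L (i + m) := by congr 1; ring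
    rw [e2] at h2
    push_cast
    rw [e]
    linarith

set_option maxHeartbeats 2000000 in
theorem stmt3 (g : ℝ → ℝ) (hg_nonneg : ∀ x, 0 ≤ g x) (hg_int : Integrable g)
    (μ : Measure ℝ) (hμ : μ = volume.withDensity (fun x => ENNReal.ofReal (g x)))
    [IsProbabilityMeasure μ]
    (α : ℝ) (hα : 1 / 2 < α)
    (C : ℝ) (hC : 0 < C)
    (hdecay : ∀ ξ : ℝ, ξ ≠ 0 →
      ‖∫ x : ℝ, (g x : ℂ) * Complex.exp ((-2 * π * ξ * x : ℝ) * Complex.I)‖ ≤ C * |ξ| ^ (-α))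
    (lam : ℝ → ℤ → ℝ) (hmono : ∀ A > 0, StrictMono (lam A))
    (hframe : ∀ A > 0, ∀ f : ℝ → ℂ, MemLp f 2 μ →
      A * ∫ x, ‖f x‖ ^ 2 ∂μ ≤
        ∑' k : ℤ, ‖∫ x, f x * Complex.exp ((-2 * π * lam A k * x : ℝ) * Complex.I) ∂μ‖ ^ 2) :
    Tendsto (fun A : ℝ => gmin (lam A)) atTop (nhds 0) := by
  have h2α : (1:ℝ) < 2 * α := by linarith
  have hgm : AEMeasurable (fun x => (g x).toNNReal) volume :=
    hg_int.aestronglyMeasurable.aemeasurable.real_toNNReal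
  -- antitonicity of x ↦ x ^ (-β)
  have hanti : ∀ (β x y : ℝ), 0 ≤ β → 0 < x → x ≤ y → y ^ (-β) ≤ x ^ (-β) := by
    intro β x y hβ hx hxy
    rw [Real.rpow_neg hx.le, Real.rpow_neg (hx.trans_le hxy).le]
    exact inv_anti₀ (Real.rpow_pos_of_pos hx _) (Real.rpow_le_rpow hx.le hxy hβ)
  have hsq : ∀ u : ℝ, 0 < u → (C * u ^ (-α)) ^ 2 = C ^ 2 * u ^ (-(2 * α)) := by
    intro u hu
    rw [mul_pow]
    congr 1
    rw [pow_two, ← Real.rpow_add hu]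
    congr 1
    ring
  have key : ∀ ε : ℝ, 0 < ε → ∀ A : ℝ,
      3 * (∑' m : ℕ, C ^ 2 * (ε / 2 + m * ε) ^ (-(2 * α))) + 1 < A →
      {k : ℤ | lam A k - lam A (k - 1) < ε}.Infinite := by
    intro ε hε A hA
    set B : ℕ → ℝ := fun m => C ^ 2 * (ε / 2 + m * ε) ^ (-(2 * α)) with hBdef
    have hbase : ∀ m : ℕ, 0 < ε / 2 + (m : ℝ) * ε := by
      intro m
      have : (0:ℝ) ≤ (m : ℝ) * ε := mul_nonneg (Nat.cast_nonneg m) hε.le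
      linarith
    have hBnonneg : ∀ m, 0 ≤ B m := fun m =>
      mul_nonneg (sq_nonneg C) (Real.rpow_nonneg (hbase m).le _)
    -- summability of B
    have haux : Summable (fun m : ℕ => ((m : ℝ) + 1) ^ (-(2 * α))) := by
      have h0 : Summable (fun n : ℕ => (n : ℝ) ^ (-(2 * α))) :=
        Real.summable_nat_rpow.mpr (by linarith)
      have h1 := (summable_nat_add_iff 1).mpr h0
      exact h1.congr (fun n => by push_cast; ring_nf)
    have hBsum : Summable B := by
      have hcmp : ∀ m : ℕ, B m ≤ (C ^ 2 * (ε / 2) ^ (-(2 * α))) * ((m : ℝ) + 1) ^ (-(2 * α)) := by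
        intro m
        have hle : (ε / 2) * ((m : ℝ) + 1) ≤ ε / 2 + m * ε := by
          have : (0:ℝ) ≤ (m : ℝ) * ε := mul_nonneg (Nat.cast_nonneg m) hε.le
          have h2 : (0:ℝ) ≤ (m : ℝ) := Nat.cast_nonneg m
          nlinarith
        have h1 : (ε / 2 + m * ε) ^ (-(2 * α)) ≤ ((ε / 2) * ((m : ℝ) + 1)) ^ (-(2 * α)) :=
          hanti _ _ _ (by linarith) (by positivity) hle
        have h2 : ((ε / 2) * ((m : ℝ) + 1)) ^ (-(2 * α))
            = (ε / 2) ^ (-(2 * α)) * ((m : ℝ) + 1) ^ (-(2 * α)) :=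
          Real.mul_rpow (by positivity) (by positivity)
        calc B m ≤ C ^ 2 * ((ε / 2) * ((m : ℝ) + 1)) ^ (-(2 * α)) := by
              exact mul_le_mul_of_nonneg_left h1 (sq_nonneg C)
          _ = (C ^ 2 * (ε / 2) ^ (-(2 * α))) * ((m : ℝ) + 1) ^ (-(2 * α)) := by rw [h2]; ring
      exact Summable.of_nonneg_of_le hBnonneg hcmp (haux.mul_left _)
    set SB : ℝ := ∑' m : ℕ, B m with hSBdef
    have hSBnonneg : 0 ≤ SB := tsum_nonneg hBnonneg
    have hApos : 0 < A := by linarith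
    by_contra hinf
    rw [Set.not_infinite] at hinf
    -- extract K
    obtain ⟨K0, hK0⟩ := (hinf.image (fun k : ℤ => k.natAbs)).bddAbove
    set K : ℕ := K0 + 1 with hKdef
    have hK : ∀ j : ℤ, K ≤ j.natAbs → ε ≤ lam A j - lam A (j - 1) := by
      intro j hj
      by_contra hlt
      push_neg at hlt
      have hmem : j.natAbs ∈ (fun k : ℤ => k.natAbs) '' {k : ℤ | lam A k - lam A (k - 1) < ε} :=
        Set.mem_image_of_mem _ hlt
      have := hK0 hmem
      omega
    -- choose M0
    obtain ⟨M0, hM0⟩ := exists_nat_ge (max 1 (2 * K * C ^ 2) / ε)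
    have hKpos : (0:ℝ) < (K : ℝ) := by exact_mod_cast Nat.succ_pos K0
    have h2KC : (0:ℝ) < 2 * K * C ^ 2 := by positivity
    have hmax : max 1 (2 * (K:ℝ) * C ^ 2) ≤ (M0 : ℝ) * ε := by
      rw [div_le_iff₀ hε] at hM0; exact hM0
    have hMK : (2 * (K:ℝ)) * B M0 ≤ 1 := by
      set x : ℝ := ε / 2 + (M0 : ℝ) * ε with hxdef
      have hx1 : (1:ℝ) ≤ x := by
        have := le_trans (le_max_left 1 (2 * (K:ℝ) * C ^ 2)) hmax
        simp only [hxdef]; linarith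
      have hxK : 2 * (K:ℝ) * C ^ 2 ≤ x := by
        have := le_trans (le_max_right 1 (2 * (K:ℝ) * C ^ 2)) hmax
        simp only [hxdef]; linarith
      have hxpow : x ≤ x ^ (2 * α) := by
        calc x = x ^ (1:ℝ) := (Real.rpow_one x).symm
          _ ≤ x ^ (2 * α) := Real.rpow_le_rpow_of_exponent_le hx1 (by linarith)
      have hxa : 2 * (K:ℝ) * C ^ 2 ≤ x ^ (2 * α) := le_trans hxK hxpow
      have hinv := inv_anti₀ h2KC hxa
      have hBM0 : B M0 = C ^ 2 * (x ^ (2 * α))⁻¹ := by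
        rw [hBdef]
        simp only []
        rw [← Real.rpow_neg (by linarith : (0:ℝ) ≤ x)]
      rw [hBM0]
      calc (2 * (K:ℝ)) * (C ^ 2 * (x ^ (2 * α))⁻¹)
          = (2 * (K:ℝ) * C ^ 2) * (x ^ (2 * α))⁻¹ := by ring
        _ ≤ (2 * (K:ℝ) * C ^ 2) * (2 * (K:ℝ) * C ^ 2)⁻¹ :=
            mul_le_mul_of_nonneg_left hinv h2KC.le
        _ = 1 := mul_inv_cancel₀ h2KC.ne'
    set M : ℕ := M0 + 1 with hMdef
    set N : ℤ := (K : ℤ) + (M : ℤ) with hNdef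
    set t : ℝ := lam A (-N) + ε / 2 with htdef
    set f : ℝ → ℂ := fun x => Complex.exp ((2 * π * t * x : ℝ) * Complex.I) with hfdef
    have hfc : Continuous f := by
      apply Continuous.cexp
      continuity
    have hnorm : ∀ x, ‖f x‖ = 1 := by
      intro x
      simp only [hfdef]
      exact Complex.norm_exp_ofReal_mul_I _
    have hf2 : MemLp f 2 μ :=
      MemLp.of_bound hfc.aestronglyMeasurable 1 (ae_of_all _ fun x => le_of_eq (hnorm x))
    have hint : (∫ x, ‖f x‖ ^ 2 ∂μ) = 1 := by
      simp [hnorm]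
    have frame := hframe A hApos f hf2
    rw [hint, mul_one] at frame
    set a : ℤ → ℝ := fun k =>
      ‖∫ x, f x * Complex.exp ((-2 * π * lam A k * x : ℝ) * Complex.I) ∂μ‖ ^ 2 with hadef
    -- key term bound
    have hterm : ∀ (k : ℤ) (m : ℕ), ε / 2 + (m:ℝ) * ε ≤ |lam A k - t| → a k ≤ B m := by
      intro k m hd
      have hdm : 0 < ε / 2 + (m:ℝ) * ε := hbase m
      have hξ : lam A k - t ≠ 0 := by
        intro h
        rw [h, abs_zero] at hd
        linarith
      have e1 : (∫ x, f x * Complex.exp ((-2 * π * lam A k * x : ℝ) * Complex.I) ∂μ)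
          = ∫ x, Complex.exp ((-2 * π * (lam A k - t) * x : ℝ) * Complex.I) ∂μ := by
        apply integral_congr_ae
        filter_upwards with x
        simp only [hfdef]
        rw [← Complex.exp_add]
        congr 1
        push_cast
        ring
      have e2 : (∫ x, Complex.exp ((-2 * π * (lam A k - t) * x : ℝ) * Complex.I) ∂μ)
          = ∫ x, (g x : ℂ) * Complex.exp ((-2 * π * (lam A k - t) * x : ℝ) * Complex.I) := by
        rw [hμ]
        rw [show (fun x => ENNReal.ofReal (g x)) = (fun x => ((g x).toNNReal : ℝ≥0∞)) from rfl]
        rw [integral_withDensity_eq_integral_smul₀ hgm]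
        apply integral_congr_ae
        filter_upwards with x
        rw [NNReal.smul_def, Complex.real_smul, Real.coe_toNNReal _ (hg_nonneg x)]
      have hb := hdecay (lam A k - t) hξ
      have h1 : a k ≤ (C * |lam A k - t| ^ (-α)) ^ 2 := by
        simp only [hadef]
        rw [e1, e2]
        exact pow_le_pow_left₀ (norm_nonneg _) hb 2
      have h2 : |lam A k - t| ^ (-α) ≤ (ε / 2 + (m:ℝ) * ε) ^ (-α) :=
        hanti α _ _ (by linarith) hdm hd
      have h3 : (C * |lam A k - t| ^ (-α)) ^ 2 ≤ (C * (ε / 2 + (m:ℝ) * ε) ^ (-α)) ^ 2 := by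
        apply pow_le_pow_left₀
        · positivity
        · exact mul_le_mul_of_nonneg_left h2 hC.le
      calc a k ≤ (C * (ε / 2 + (m:ℝ) * ε) ^ (-α)) ^ 2 := le_trans h1 h3
        _ = B m := hsq _ hdm
    -- growth facts
    have hgrow : ∀ (i : ℤ) (n : ℕ),
        (∀ l : ℤ, i < l → l ≤ i + n → ε ≤ lam A l - lam A (l - 1)) →
        lam A i + n * ε ≤ lam A (i + n) := lam_grow (lam A) ε
    have hmonoA : Monotone (lam A) := (hmono A hApos).monotone
    have hmid : lam A (-N) + (M:ℝ) * ε ≤ lam A (-(K:ℤ)) := by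
      have := hgrow (-N) M (fun l hl hl' => hK l (by omega))
      rwa [show (-N + (M:ℤ)) = -(K:ℤ) by omega] at this
    -- the four comparison functions
    set cl : ℤ → ℝ := fun k => if k ≤ -N then B ((-N - k).toNat) else 0 with hcldef
    set cm1 : ℤ → ℝ := fun k =>
      if -N < k ∧ k ≤ -(K:ℤ) then B ((k + N - 1).toNat) else 0 with hcm1def
    set cm2 : ℤ → ℝ := fun k => if -(K:ℤ) < k ∧ k ≤ (K:ℤ) then B M0 else 0 with hcm2def
    set cr : ℤ → ℝ := fun k => if (K:ℤ) < k then B (M0 + (k - (K:ℤ)).toNat) else 0 with hcrdef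
    have hclnn : ∀ k, 0 ≤ cl k := by
      intro k; simp only [hcldef]; split_ifs; exacts [hBnonneg _, le_refl 0]
    have hcm1nn : ∀ k, 0 ≤ cm1 k := by
      intro k; simp only [hcm1def]; split_ifs; exacts [hBnonneg _, le_refl 0]
    have hcm2nn : ∀ k, 0 ≤ cm2 k := by
      intro k; simp only [hcm2def]; split_ifs; exacts [hBnonneg _, le_refl 0]
    have hcrnn : ∀ k, 0 ≤ cr k := by
      intro k; simp only [hcrdef]; split_ifs; exacts [hBnonneg _, le_refl 0]
    -- pointwise bound
    have hpt : ∀ k : ℤ, a k ≤ cl k + cm1 k + cm2 k + cr k := by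
      intro k
      rcases le_or_gt k (-N) with h1 | h1
      · have hak : a k ≤ B ((-N - k).toNat) := by
          apply hterm
          have hg := hgrow k ((-N - k).toNat) (fun l hl hl' => hK l (by omega))
          rw [show (k + ((-N - k).toNat : ℤ)) = -N by omega] at hg
          have h2 : ε / 2 + ((-N - k).toNat : ℝ) * ε ≤ t - lam A k := by
            simp only [htdef]; linarith
          calc ε / 2 + ((-N - k).toNat : ℝ) * ε ≤ t - lam A k := h2
            _ = -(lam A k - t) := by ring
            _ ≤ |lam A k - t| := neg_le_abs _
        have e : cl k = B ((-N - k).toNat) := if_pos h1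
        have := hcm1nn k; have := hcm2nn k; have := hcrnn k
        linarith [hak, e.ge]
      rcases le_or_gt k (-(K:ℤ)) with h2 | h2
      · have hak : a k ≤ B ((k + N - 1).toNat) := by
          apply hterm
          have hg := hgrow (-N) ((k + N).toNat) (fun l hl hl' => hK l (by omega))
          rw [show (-N + ((k + N).toNat : ℤ)) = k by omega] at hg
          have hc : ((k + N).toNat : ℝ) = ((k + N - 1).toNat : ℝ) + 1 := by
            have : (k + N).toNat = (k + N - 1).toNat + 1 := by omega
            rw [this]; push_cast; ring
          have h3 : ε / 2 + ((k + N - 1).toNat : ℝ) * ε ≤ lam A k - t := by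
            simp only [htdef]
            rw [hc] at hg
            nlinarith
          calc ε / 2 + ((k + N - 1).toNat : ℝ) * ε ≤ lam A k - t := h3
            _ ≤ |lam A k - t| := le_abs_self _
        have e : cm1 k = B ((k + N - 1).toNat) := if_pos ⟨h1, h2⟩
        have := hclnn k; have := hcm2nn k; have := hcrnn k
        linarith [hak, e.ge]
      rcases le_or_gt k (K:ℤ) with h3 | h3
      · have hak : a k ≤ B M0 := by
          apply hterm
          have hge : lam A (-(K:ℤ)) ≤ lam A k := hmonoA (by omega)
          have hM0c : (M:ℝ) = (M0:ℝ) + 1 := by rw [hMdef]; push_cast; ring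
          have h4 : ε / 2 + (M0:ℝ) * ε ≤ lam A k - t := by
            simp only [htdef]
            nlinarith [hmid]
          calc ε / 2 + (M0:ℝ) * ε ≤ lam A k - t := h4
            _ ≤ |lam A k - t| := le_abs_self _
        have e : cm2 k = B M0 := if_pos ⟨h2, h3⟩
        have := hclnn k; have := hcm1nn k; have := hcrnn k
        linarith [hak, e.ge]
      · have hak : a k ≤ B (M0 + (k - (K:ℤ)).toNat) := by
          apply hterm
          have hg := hgrow (K:ℤ) ((k - K).toNat) (fun l hl hl' => hK l (by omega))
          rw [show ((K:ℤ) + ((k - (K:ℤ)).toNat : ℤ)) = k by omega] at hg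
          have hge : lam A (-(K:ℤ)) ≤ lam A (K:ℤ) := hmonoA (by omega)
          have hM0c : (M:ℝ) = (M0:ℝ) + 1 := by rw [hMdef]; push_cast; ring
          have hcast : ((M0 + (k - (K:ℤ)).toNat : ℕ) : ℝ)
              = (M0:ℝ) + ((k - (K:ℤ)).toNat : ℝ) := by push_cast; ring
          have h4 : ε / 2 + ((M0 + (k - (K:ℤ)).toNat : ℕ) : ℝ) * ε ≤ lam A k - t := by
            simp only [htdef]
            rw [hcast]
            nlinarith [hmid]
          calc ε / 2 + ((M0 + (k - (K:ℤ)).toNat : ℕ) : ℝ) * ε ≤ lam A k - t := h4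
            _ ≤ |lam A k - t| := le_abs_self _
        have e : cr k = B (M0 + (k - (K:ℤ)).toNat) := if_pos h3
        have := hclnn k; have := hcm1nn k; have := hcm2nn k
        linarith [hak, e.ge]
    -- summability and tsum bounds for the four pieces
    -- left piece
    have hinjL : Function.Injective (fun m : ℕ => -N - (m:ℤ)) := by
      intro p q h
      simp only at h
      omega
    have hsuppL : ∀ x ∉ Set.range (fun m : ℕ => -N - (m:ℤ)), cl x = 0 := by
      intro x hx
      apply if_neg
      intro hc
      exact hx ⟨(-N - x).toNat, show -N - (((-N - x).toNat : ℕ) : ℤ) = x by omega⟩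
    have hsuppL' : Function.support cl ⊆ Set.range (fun m : ℕ => -N - (m:ℤ)) := by
      intro x hx
      by_contra h
      exact hx (hsuppL x h)
    have hcompL : (fun m : ℕ => cl (-N - (m:ℤ))) = B := by
      funext m
      simp only [hcldef]
      rw [if_pos (by omega : -N - (m:ℤ) ≤ -N)]
      congr 1
      omega
    have hsumL : Summable cl := by
      have := (hinjL.summable_iff hsuppL).mp (by rw [show ((cl ∘ fun m : ℕ => -N - (m:ℤ))) = B from hcompL]; exact hBsum)
      exact this
    have htsumL : (∑' k, cl k) = SB := by
      rw [← hinjL.tsum_eq hsuppL']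
      exact tsum_congr fun m => congrFun hcompL m
    -- mid1 piece
    set g1 : ℕ → ℝ := fun m => if m ≤ M0 then B m else 0 with hg1def
    have hg1nn : ∀ m, 0 ≤ g1 m := by
      intro m; simp only [hg1def]; split_ifs; exacts [hBnonneg _, le_refl 0]
    have hg1le : ∀ m, g1 m ≤ B m := by
      intro m; simp only [hg1def]; split_ifs; exacts [le_refl _, hBnonneg _]
    have hg1sum : Summable g1 := Summable.of_nonneg_of_le hg1nn hg1le hBsum
    have hinjM1 : Function.Injective (fun m : ℕ => -N + 1 + (m:ℤ)) := by
      intro p q h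
      simp only at h
      omega
    have hsuppM1 : ∀ x ∉ Set.range (fun m : ℕ => -N + 1 + (m:ℤ)), cm1 x = 0 := by
      intro x hx
      apply if_neg
      intro hc
      exact hx ⟨(x + N - 1).toNat, show -N + 1 + (((x + N - 1).toNat : ℕ) : ℤ) = x by omega⟩
    have hsuppM1' : Function.support cm1 ⊆ Set.range (fun m : ℕ => -N + 1 + (m:ℤ)) := by
      intro x hx
      by_contra h
      exact hx (hsuppM1 x h)
    have hcompM1 : (fun m : ℕ => cm1 (-N + 1 + (m:ℤ))) = g1 := by
      funext m
      simp only [hcm1def, hg1def]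
      by_cases hm : m ≤ M0
      · rw [if_pos ⟨by omega, by omega⟩, if_pos hm]
        congr 1
        omega
      · rw [if_neg (by omega), if_neg hm]
    have hsumM1 : Summable cm1 := by
      exact (hinjM1.summable_iff hsuppM1).mp
        (by rw [show ((cm1 ∘ fun m : ℕ => -N + 1 + (m:ℤ))) = g1 from hcompM1]; exact hg1sum)
    have htsumM1 : (∑' k, cm1 k) ≤ SB := by
      rw [← hinjM1.tsum_eq hsuppM1']
      calc (∑' m : ℕ, cm1 (-N + 1 + (m:ℤ))) = ∑' m : ℕ, g1 m :=
            tsum_congr fun m => congrFun hcompM1 m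
        _ ≤ SB := Summable.tsum_le_tsum hg1le hg1sum hBsum
    -- mid2 piece
    have hzero2 : ∀ x ∉ Finset.Icc (-(K:ℤ) + 1) (K:ℤ), cm2 x = 0 := by
      intro x hx
      rw [Finset.mem_Icc] at hx
      apply if_neg
      intro hc
      exact hx ⟨by omega, hc.2⟩
    have hsum2 : Summable cm2 := summable_of_ne_finset_zero hzero2
    have htsum2 : (∑' k, cm2 k) ≤ 1 := by
      rw [tsum_eq_sum hzero2]
      have hcard : (Finset.Icc (-(K:ℤ) + 1) (K:ℤ)).card = 2 * K := by
        rw [Int.card_Icc]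
        omega
      have hle : ∀ x ∈ Finset.Icc (-(K:ℤ) + 1) (K:ℤ), cm2 x ≤ B M0 := by
        intro x _
        simp only [hcm2def]
        split_ifs
        exacts [le_refl _, hBnonneg _]
      calc (∑ x ∈ Finset.Icc (-(K:ℤ) + 1) (K:ℤ), cm2 x)
          ≤ (Finset.Icc (-(K:ℤ) + 1) (K:ℤ)).card • B M0 := Finset.sum_le_card_nsmul _ _ _ hle
        _ = (2 * (K:ℝ)) * B M0 := by rw [hcard, nsmul_eq_mul]; push_cast; ring
        _ ≤ 1 := hMK
    -- right piece
    have hinjR : Function.Injective (fun m : ℕ => (K:ℤ) + 1 + (m:ℤ)) := by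
      intro p q h
      simp only at h
      omega
    have hsuppR : ∀ x ∉ Set.range (fun m : ℕ => (K:ℤ) + 1 + (m:ℤ)), cr x = 0 := by
      intro x hx
      apply if_neg
      intro hc
      exact hx ⟨(x - K - 1).toNat, show (K:ℤ) + 1 + (((x - K - 1).toNat : ℕ) : ℤ) = x by omega⟩
    have hsuppR' : Function.support cr ⊆ Set.range (fun m : ℕ => (K:ℤ) + 1 + (m:ℤ)) := by
      intro x hx
      by_contra h
      exact hx (hsuppR x h)
    have hcompR : (fun m : ℕ => cr ((K:ℤ) + 1 + (m:ℤ))) = fun m : ℕ => B (m + (M0 + 1)) := by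
      funext m
      simp only [hcrdef]
      rw [if_pos (by omega : (K:ℤ) < (K:ℤ) + 1 + (m:ℤ))]
      congr 1
      omega
    have hg2sum : Summable (fun m : ℕ => B (m + (M0 + 1))) :=
      (summable_nat_add_iff (M0 + 1)).mpr hBsum
    have hsumR : Summable cr := by
      exact (hinjR.summable_iff hsuppR).mp
        (by rw [show ((cr ∘ fun m : ℕ => (K:ℤ) + 1 + (m:ℤ))) = fun m : ℕ => B (m + (M0 + 1)) from hcompR]
            exact hg2sum)
    have htsumR : (∑' k, cr k) ≤ SB := by
      rw [← hinjR.tsum_eq hsuppR']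
      have e : (∑' m : ℕ, cr ((K:ℤ) + 1 + (m:ℤ))) = ∑' m : ℕ, B (m + (M0 + 1)) :=
        tsum_congr fun m => congrFun hcompR m
      rw [e]
      have := hBsum.sum_add_tsum_nat_add (M0 + 1)
      have hpart : 0 ≤ ∑ i ∈ Finset.range (M0 + 1), B i :=
        Finset.sum_nonneg fun i _ => hBnonneg i
      linarith
    -- combine
    have hsa : Summable a := by
      by_contra hs
      rw [tsum_eq_zero_of_not_summable hs] at frame
      linarith
    have hsum_tot : Summable (fun k => cl k + cm1 k + cm2 k + cr k) :=
      ((hsumL.add hsumM1).add hsum2).add hsumR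
    have hfinal : A ≤ 3 * SB + 1 := by
      have h1 : (∑' k, a k) ≤ ∑' k, (cl k + cm1 k + cm2 k + cr k) :=
        Summable.tsum_le_tsum hpt hsa hsum_tot
      have h2 : (∑' k, (cl k + cm1 k + cm2 k + cr k))
          = (∑' k, cl k) + (∑' k, cm1 k) + (∑' k, cm2 k) + (∑' k, cr k) := by
        rw [Summable.tsum_add ((hsumL.add hsumM1).add hsum2) hsumR,
            Summable.tsum_add (hsumL.add hsumM1) hsum2, Summable.tsum_add hsumL hsumM1]
      have := frame
      rw [h2] at h1
      have := htsumL
      linarith [htsumM1, htsum2, htsumR]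
    linarith
  -- conclude the limit
  rw [Metric.tendsto_atTop]
  intro ε hε
  refine ⟨3 * (∑' m : ℕ, C ^ 2 * (ε / 2 / 2 + m * (ε / 2)) ^ (-(2 * α))) + 2, fun A hA => ?_⟩
  have hSBnn : 0 ≤ ∑' m : ℕ, C ^ 2 * (ε / 2 / 2 + m * (ε / 2)) ^ (-(2 * α)) := by
    apply tsum_nonneg
    intro m
    have hb : (0:ℝ) < ε / 2 / 2 + m * (ε / 2) := by
      have : (0:ℝ) ≤ (m : ℝ) * (ε / 2) := mul_nonneg (Nat.cast_nonneg m) (by linarith)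
      linarith
    exact mul_nonneg (sq_nonneg C) (Real.rpow_nonneg hb.le _)
  have hinf := key (ε / 2) (by linarith) A (by linarith)
  have hnonneg : 0 ≤ gmin (lam A) := Real.sInf_nonneg (fun x hx => hx.1)
  have hle : gmin (lam A) ≤ ε / 2 := by
    apply csInf_le ⟨0, fun x hx => hx.1⟩
    exact ⟨by linarith, hinf⟩
  rw [Real.dist_eq, sub_zero, abs_of_nonneg hnonneg]
  linarith
end

section
/- Suppose a countable set Λ ⊂ ℝ, enumerated in increasing order as Λ = {λ_k : k ∈ ℤ}, satisfies the frame inequalities A ∫_{[0,1]} |f(x)|² dx ≤ ∑_{λ∈Λ} |∫_{[0,1]} f(x) e^{-2πiλx} dx|² ≤ B ∫_{[0,1]} |f(x)|² dx for all f ∈ L²([0,1]), where 0 < A ≤ B < ∞. Then 4/(π²B) ≤ g_max(Λ) ≤ sup{g_k(Λ) : k ∈ ℤ} ≤ π²B/A + 2. -/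
open MeasureTheory Filter Set
open scoped Real

noncomputable def Gfun (u : ℝ) : ℝ :=
  ‖∫ x in Icc (0:ℝ) 1, Complex.exp ((2*π*u*x : ℝ) * Complex.I)‖^2

lemma Gfun_nonneg (u : ℝ) : 0 ≤ Gfun u := sq_nonneg _

lemma Gfun_zero : Gfun 0 = 1 := by
  unfold Gfun
  have : ∀ x : ℝ, ((2*π*0*x : ℝ) : ℂ) * Complex.I = 0 := by intro x; push_cast; ring
  simp only [this, Complex.exp_zero]
  rw [setIntegral_const]
  simp [Real.volume_Icc]

lemma Gfun_eq (u : ℝ) (hu : u ≠ 0) : Gfun u = Real.sin (π*u)^2 / (π*u)^2 := by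
  unfold Gfun
  have hc : ((2*π*u:ℝ) : ℂ) * Complex.I ≠ 0 := by
    simp [Complex.ext_iff, Real.pi_ne_zero, hu]
  have hint : ∫ x in Icc (0:ℝ) 1, Complex.exp ((2*π*u*x : ℝ) * Complex.I)
      = (Complex.exp ((2*π*u:ℝ)*Complex.I) - 1)/((2*π*u:ℝ)*Complex.I) := by
    rw [MeasureTheory.integral_Icc_eq_integral_Ioc,
      ← intervalIntegral.integral_of_le (by norm_num : (0:ℝ) ≤ 1)]
    have h2 : ∀ x : ℝ, Complex.exp ((2*π*u*x : ℝ) * Complex.I)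
        = Complex.exp ((((2*π*u:ℝ):ℂ) * Complex.I) * x) := by
      intro x; push_cast; ring_nf
    simp_rw [h2]
    rw [integral_exp_mul_complex hc]
    rw [Complex.ofReal_one, mul_one, Complex.ofReal_zero, mul_zero, Complex.exp_zero]
  rw [hint, norm_div, div_pow]
  have h1 : ‖((2*π*u:ℝ):ℂ)*Complex.I‖^2 = (2*π*u)^2 := by
    rw [norm_mul, Complex.norm_I, mul_one, Complex.norm_real, Real.norm_eq_abs, sq_abs]
  have h2 : ‖Complex.exp ((2*π*u:ℝ)*Complex.I) - 1‖^2 = 2 - 2*Real.cos (2*π*u) := by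
    rw [Complex.sq_norm, Complex.normSq_apply]
    simp only [Complex.sub_re, Complex.sub_im, Complex.exp_ofReal_mul_I_re,
      Complex.exp_ofReal_mul_I_im, Complex.one_re, Complex.one_im]
    nlinarith [Real.sin_sq_add_cos_sq (2*π*u)]
  rw [h1, h2]
  have hcos : Real.cos (2*π*u) = 1 - 2 * Real.sin (π*u)^2 := by
    have h := Real.cos_two_mul (π*u)
    have h2 := Real.sin_sq_add_cos_sq (π*u)
    have h3 : 2*π*u = 2*(π*u) := by ring
    rw [h3, h]; nlinarith
  rw [hcos]
  have hπu : (π*u) ≠ 0 := mul_ne_zero Real.pi_ne_zero hu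
  field_simp
  ring

lemma Gfun_ge (u : ℝ) (h : |u| ≤ 1/2) : 4/π^2 ≤ Gfun u := by
  have hπ : 0 < π := Real.pi_pos
  rcases eq_or_ne u 0 with rfl | hu
  · rw [Gfun_zero]
    rw [div_le_one (by positivity)]
    nlinarith [Real.pi_gt_three]
  · rw [Gfun_eq u hu]
    set v := |u| with hv
    have hv0 : 0 < v := abs_pos.mpr hu
    have hsin : Real.sin (π*u)^2 = Real.sin (π*v)^2 := by
      rcases abs_choice u with h1 | h1
      · rw [hv, h1]
      · rw [hv, h1, mul_neg, Real.sin_neg, neg_sq]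
    have hsq : (π*u)^2 = (π*v)^2 := by
      rw [mul_pow, mul_pow, hv, sq_abs]
    rw [hsin, hsq]
    have hj : 2*v ≤ Real.sin (π*v) := by
      have := Real.mul_le_sin (x := π*v) (by positivity)
        (by rw [div_eq_mul_inv]; nlinarith)
      calc 2*v = 2/π * (π*v) := by field_simp
        _ ≤ _ := this
    have : (2*v)^2 ≤ Real.sin (π*v)^2 := by
      apply sq_le_sq' _ hj
      nlinarith
    rw [div_le_div_iff₀ (by positivity) (by positivity)]
    nlinarith

lemma Gfun_le (u : ℝ) (hu : u ≠ 0) : Gfun u ≤ 1/(π^2*u^2) := by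
  have hπ : 0 < π := Real.pi_pos
  rw [Gfun_eq u hu]
  have h1 : Real.sin (π*u)^2 ≤ 1 := Real.sin_sq_le_one _
  have h2 : (π*u)^2 = π^2*u^2 := by ring
  rw [h2, div_le_div_iff₀ (by positivity) (by positivity)]
  nlinarith
  
lemma tele (c : ℝ) (hc : 2 ≤ c) :
    Summable (fun i : ℕ => 1/((c+i)^2)) ∧ (∑' i : ℕ, 1/((c+i)^2)) ≤ 2/c := by
  have hpt : ∀ i : ℕ, 1/((c+i)^2) ≤ 1/(c-1+i) - 1/(c+i) := by
    intro i
    have hi : (0:ℝ) ≤ (i:ℝ) := Nat.cast_nonneg i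
    have h1 : (0:ℝ) < c-1+i := by linarith
    have h2 : (0:ℝ) < c+i := by linarith
    rw [div_sub_div _ _ (ne_of_gt h1) (ne_of_gt h2), div_le_div_iff₀ (by positivity) (by positivity)]
    nlinarith
  have hpos : ∀ i : ℕ, (0:ℝ) ≤ 1/((c+i)^2) := by
    intro i
    have hi : (0:ℝ) ≤ (i:ℝ) := Nat.cast_nonneg i
    positivity
  have hsum : ∀ n : ℕ, ∑ i ∈ Finset.range n, 1/((c+i)^2) ≤ 2/c := by
    intro n
    have key : ∑ i ∈ Finset.range n, (1/(c-1+i) - 1/(c-1+(i+1:ℕ))) = 1/(c-1+(0:ℕ)) - 1/(c-1+n) :=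
      Finset.sum_range_sub' (fun i : ℕ => 1/(c-1+i)) n
    have h1 : ∑ i ∈ Finset.range n, 1/((c+i)^2) ≤ ∑ i ∈ Finset.range n, (1/(c-1+i) - 1/(c-1+(i+1:ℕ))) := by
      apply Finset.sum_le_sum
      intro i _
      have : (c-1+((i:ℕ)+1:ℕ):ℝ) = c + i := by push_cast; ring
      rw [this]
      exact hpt i
    have hn : (0:ℝ) ≤ (n:ℝ) := Nat.cast_nonneg n
    have h2 : 1/(c-1+(0:ℕ)) - 1/(c-1+(n:ℕ)) ≤ 2/c := by
      have hn1 : (0:ℝ) < c-1+(n:ℝ) := by linarith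
      have : (0:ℝ) ≤ 1/(c-1+(n:ℝ)) := by positivity
      push_cast
      have : 1/(c-1+(0:ℝ)) ≤ 2/c := by
        rw [div_le_div_iff₀ (by linarith) (by linarith)]
        nlinarith
      linarith
    calc ∑ i ∈ Finset.range n, 1/((c+i)^2) ≤ _ := h1
      _ = _ := key
      _ ≤ 2/c := h2
  refine ⟨summable_of_sum_range_le hpos hsum, Summable.tsum_le_of_sum_range_le (summable_of_sum_range_le hpos hsum) hsum⟩

set_option maxHeartbeats 2000000 in
theorem stmt5 (lam : ℤ → ℝ) (hmono : StrictMono lam)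
    (A B : ℝ) (hA : 0 < A) (hAB : A ≤ B)
    (hframe : ∀ f : ℝ → ℂ, MemLp f 2 (volume.restrict (Icc (0 : ℝ) 1)) →
      A * ∫ x in Icc (0 : ℝ) 1, ‖f x‖ ^ 2 ≤
        (∑' k : ℤ,
          ‖∫ x in Icc (0 : ℝ) 1, f x * Complex.exp ((-2 * π * lam k * x : ℝ) * Complex.I)‖ ^ 2) ∧
      (∑' k : ℤ,
          ‖∫ x in Icc (0 : ℝ) 1, f x * Complex.exp ((-2 * π * lam k * x : ℝ) * Complex.I)‖ ^ 2) ≤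
        B * ∫ x in Icc (0 : ℝ) 1, ‖f x‖ ^ 2) :
    4 / (π ^ 2 * B) ≤ gmax lam ∧
      gmax lam ≤ (⨆ k : ℤ, (lam k - lam (k - 1))) ∧
      ∀ k : ℤ, lam k - lam (k - 1) ≤ π ^ 2 * B / A + 2 := by
  classical
  have hπ : (0:ℝ) < π := Real.pi_pos
  have hB : 0 < B := lt_of_lt_of_le hA hAB
  set f : ℝ → ℝ → ℂ := fun t x => Complex.exp ((2*π*t*x :ℝ)*Complex.I) with hfdef
  have hmem : ∀ t, MemLp (f t) 2 (volume.restrict (Icc (0:ℝ) 1)) := by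
    intro t
    apply MemLp.of_bound ?_ 1 ?_
    · apply Continuous.aestronglyMeasurable
      apply Complex.continuous_exp.comp
      exact (Complex.continuous_ofReal.comp (by continuity)).mul continuous_const
    · refine Eventually.of_forall (fun x => ?_)
      simp only [hfdef, Complex.norm_exp_ofReal_mul_I, le_refl]
  have hL2 : ∀ t, ∫ x in Icc (0:ℝ) 1, ‖f t x‖^2 = 1 := by
    intro t
    simp only [hfdef, Complex.norm_exp_ofReal_mul_I, one_pow]
    simp [Real.volume_Icc]
  have hterm : ∀ (t : ℝ) (k : ℤ),
      ‖∫ x in Icc (0:ℝ) 1, f t x * Complex.exp ((-2 * π * lam k * x : ℝ) * Complex.I)‖^2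
        = Gfun (t - lam k) := by
    intro t k
    unfold Gfun
    have heq : (∫ x in Icc (0:ℝ) 1, f t x * Complex.exp ((-2 * π * lam k * x : ℝ) * Complex.I))
        = ∫ x in Icc (0:ℝ) 1, Complex.exp ((2*π*(t - lam k)*x : ℝ) * Complex.I) := by
      apply integral_congr_ae
      refine Eventually.of_forall (fun x => ?_)
      simp only [hfdef]
      rw [← Complex.exp_add]
      congr 1
      push_cast
      ring
    rw [heq]
  have hGsum : ∀ t : ℝ, A ≤ (∑' k : ℤ, Gfun (t - lam k)) ∧ (∑' k : ℤ, Gfun (t - lam k)) ≤ B := by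
    intro t
    have h := hframe (f t) (hmem t)
    rw [hL2 t, mul_one, mul_one] at h
    simp_rw [hterm t] at h
    exact h
  have hsummable : ∀ t : ℝ, Summable (fun k : ℤ => Gfun (t - lam k)) := by
    intro t
    by_contra h
    have h0 := tsum_eq_zero_of_not_summable h
    have := (hGsum t).1
    rw [h0] at this
    linarith
  have hcount : ∀ (t : ℝ) (K : Finset ℤ), (∀ k ∈ K, |lam k - t| ≤ 1/2) →
      (K.card : ℝ) * (4/π^2) ≤ B := by
    intro t K hK
    have h1 : (K.card : ℝ) * (4/π^2) ≤ ∑ k ∈ K, Gfun (t - lam k) := by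
      have := Finset.card_nsmul_le_sum K (fun k => Gfun (t - lam k)) (4/π^2)
        (fun k hk => Gfun_ge _ (by rw [abs_sub_comm]; exact hK k hk))
      simpa [nsmul_eq_mul] using this
    exact h1.trans ((Summable.sum_le_tsum K (fun k _ => Gfun_nonneg _) (hsummable t)).trans (hGsum t).2)
  have hB1 : 1 ≤ B := by
    have h := Summable.le_tsum (hsummable (lam 0)) 0 (fun j _ => Gfun_nonneg _)
    rw [sub_self, Gfun_zero] at h
    exact h.trans (hGsum (lam 0)).2
  set M : ℕ := ⌈π^2*B/4⌉₊ with hMdef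
  have hMge : π^2*B/4 ≤ (M:ℝ) := Nat.le_ceil _
  have hMle : (M:ℝ) ≤ π^2*B/4 + 1 := (Nat.ceil_lt_add_one (by positivity)).le
  have hM1 : (1:ℝ) ≤ (M:ℝ) := by nlinarith [Real.pi_gt_three]
  have hstep : ∀ j : ℤ, 1 ≤ lam (j + M) - lam j := by
    intro j
    by_contra hcon
    push_neg at hcon
    have hmono' := hmono.monotone
    have hle : lam j ≤ lam (j + M) := hmono' (by omega)
    have hK : ∀ k ∈ Finset.Icc j (j + (M:ℤ)), |lam k - (lam j + lam (j+M))/2| ≤ 1/2 := by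
      intro k hk
      rw [Finset.mem_Icc] at hk
      have h1 : lam j ≤ lam k := hmono' hk.1
      have h2 : lam k ≤ lam (j + M) := hmono' hk.2
      rw [abs_le]
      constructor <;> linarith
    have hc := hcount _ _ hK
    rw [Int.card_Icc] at hc
    have hcard : ((j + (M:ℤ) + 1 - j).toNat : ℝ) = (M:ℝ) + 1 := by
      have : (j + (M:ℤ) + 1 - j) = (M:ℤ) + 1 := by ring
      rw [this]
      push_cast [Int.toNat_of_nonneg (by omega : (0:ℤ) ≤ (M:ℤ) + 1)]
      norm_num
    rw [hcard] at hc
    have hthis : ((M:ℝ) + 1) * (4/π^2) ≤ B := hc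
    have hππ : (0:ℝ) < π^2 := by positivity
    have h2 : ((M:ℝ)+1)*4 ≤ B * π^2 := by
      calc ((M:ℝ)+1)*4 = (((M:ℝ)+1)*(4/π^2))*π^2 := by field_simp
        _ ≤ B*π^2 := by nlinarith
    have h3 : B*π^2 ≤ 4*(M:ℝ) := by nlinarith
    linarith
  have hiter : ∀ (j : ℤ) (q : ℕ), (q:ℝ) ≤ lam (j + (M:ℤ)*(q:ℤ)) - lam j := by
    intro j q
    induction q with
    | zero => simp
    | succ q ih =>
      have h1 := hstep (j + (M:ℤ)*(q:ℤ))
      have h2 : j + (M:ℤ)*((q:ℤ)+1) = (j + (M:ℤ)*(q:ℤ)) + (M:ℤ) := by ring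
      push_cast
      rw [h2]
      push_cast at ih
      linarith
  have part3 : ∀ k : ℤ, lam k - lam (k - 1) ≤ π ^ 2 * B / A + 2 := by
    intro k
    have hπ2 : (0:ℝ) < π^2 := by positivity
    have hmono' := hmono.monotone
    by_cases hcase : lam k - lam (k-1) ≤ π^2 + 2
    · have h1 : π^2 ≤ π^2*B/A := by
        rw [le_div_iff₀ hA]
        nlinarith
      linarith
    push_neg at hcase
    obtain ⟨t, a, hka, hk1a, hgap⟩ : ∃ t a : ℝ, lam k = t + a ∧ lam (k-1) = t - a ∧
        lam k - lam (k-1) = 2*a :=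
      ⟨(lam k + lam (k-1))/2, (lam k - lam (k-1))/2, by ring, by ring, by ring⟩
    have ha5 : 5 ≤ a := by nlinarith [Real.pi_gt_three]
    have hMnat : 0 < M := by exact_mod_cast lt_of_lt_of_le one_pos hM1
    have hdivle : ∀ i : ℕ, ((M:ℤ))*(((i/M : ℕ)):ℤ) ≤ (i:ℤ) := by
      intro i
      have h : ((i/M : ℕ) * M : ℕ) ≤ (i:ℕ) := Nat.div_mul_le_self i M
      have h2 : ((i/M : ℕ):ℤ) * (M:ℤ) ≤ (i:ℤ) := by exact_mod_cast h
      linarith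
    have hRdist : ∀ i : ℕ, a + ((i/M : ℕ):ℝ) ≤ lam (k + (i:ℤ)) - t := by
      intro i
      have h1 := hiter k (i/M)
      have h2 : lam (k + (M:ℤ)*(((i/M:ℕ)):ℤ)) ≤ lam (k + (i:ℤ)) := by
        apply hmono'
        have := hdivle i
        omega
      linarith
    have hLdist : ∀ i : ℕ, a + ((i/M : ℕ):ℝ) ≤ t - lam (k - 1 - (i:ℤ)) := by
      intro i
      have h1 := hiter (k - 1 - (M:ℤ)*(((i/M:ℕ)):ℤ)) (i/M)
      have he : k - 1 - (M:ℤ)*(((i/M:ℕ)):ℤ) + (M:ℤ)*(((i/M:ℕ)):ℤ) = k - 1 := by ring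
      rw [he] at h1
      have h2 : lam (k - 1 - (i:ℤ)) ≤ lam (k - 1 - (M:ℤ)*(((i/M:ℕ)):ℤ)) := by
        apply hmono'
        have := hdivle i
        omega
      linarith
    obtain ⟨c, hcdef⟩ : ∃ c : ℝ, c = (M:ℝ)*(a-1) := ⟨_, rfl⟩
    have hc2 : (2:ℝ) ≤ c := by rw [hcdef]; nlinarith
    obtain ⟨hsumh, htsumh⟩ := tele c hc2
    have hsumh2 : Summable (fun i : ℕ => (M:ℝ)^2/π^2 * (1/((c+i)^2))) := hsumh.mul_left _
    have htsum2 : (∑' i : ℕ, (M:ℝ)^2/π^2 * (1/((c+i)^2))) ≤ 2*(M:ℝ)/(π^2*(a-1)) := by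
      rw [tsum_mul_left]
      have hM0 : (M:ℝ) ≠ 0 := by linarith
      calc (M:ℝ)^2/π^2 * ∑' i:ℕ, 1/((c+i)^2) ≤ (M:ℝ)^2/π^2 * (2/c) :=
            mul_le_mul_of_nonneg_left htsumh (by positivity)
        _ = 2*(M:ℝ)/(π^2*(a-1)) := by
            rw [hcdef]
            have ha1 : a - 1 ≠ 0 := ne_of_gt (by linarith)
            have hM0' : (M:ℝ) ≠ 0 := hM0
            field_simp
    have hiMlt : ∀ i : ℕ, (i:ℝ) < (M:ℝ)*((i/M:ℕ):ℝ) + M := by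
      intro i
      have h1 := Nat.div_add_mod i M
      have h2 : i % M < M := Nat.mod_lt _ hMnat
      have h1' : ((M * (i/M) + i % M : ℕ):ℝ) = (i:ℝ) := by rw [h1]
      push_cast at h1'
      have h2' : ((i % M : ℕ):ℝ) < (M:ℝ) := by exact_mod_cast h2
      linarith
    have hkey : ∀ (i : ℕ) (w : ℝ), a + ((i/M:ℕ):ℝ) ≤ w → 1/(π^2*w^2) ≤ (M:ℝ)^2/π^2 * (1/((c+i)^2)) := by
      intro i w hw
      have hq : (0:ℝ) ≤ ((i/M:ℕ):ℝ) := Nat.cast_nonneg _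
      have hw0 : 0 < w := by linarith
      have hci : (0:ℝ) < c + i := by
        have : (0:ℝ) ≤ (i:ℝ) := Nat.cast_nonneg _
        linarith
      have hcle : c + (i:ℝ) ≤ (M:ℝ)*w := by
        have h3 := hiMlt i
        have hM0r : (0:ℝ) ≤ (M:ℝ) := by linarith
        have h4 : (M:ℝ)*(a + ((i/M:ℕ):ℝ)) ≤ (M:ℝ)*w := mul_le_mul_of_nonneg_left hw hM0r
        have h5 : (M:ℝ)*(a + ((i/M:ℕ):ℝ)) = (M:ℝ)*(a-1) + (M:ℝ)*((i/M:ℕ):ℝ) + M := by ring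
        rw [hcdef]
        linarith
      have h6 : (c+(i:ℝ))^2 ≤ ((M:ℝ)*w)^2 := pow_le_pow_left₀ hci.le hcle 2
      have h7 : 1/(π^2*w^2) ≤ (M:ℝ)^2/(π^2*(c+(i:ℝ))^2) := by
        rw [div_le_div_iff₀ (by positivity) (by positivity)]
        have h6' : π^2*(c+(i:ℝ))^2 ≤ π^2*((M:ℝ)*w)^2 := mul_le_mul_of_nonneg_left h6 hπ2.le
        have h6'' : π^2*((M:ℝ)*w)^2 = (M:ℝ)^2*(π^2*w^2) := by ring
        linarith
      calc 1/(π^2*w^2) ≤ (M:ℝ)^2/(π^2*(c+(i:ℝ))^2) := h7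
        _ = (M:ℝ)^2/π^2 * (1/((c+i)^2)) := by rw [div_mul_div_comm, mul_one]
    have hhR : ∀ i : ℕ, Gfun (t - lam (k + (i:ℤ))) ≤ (M:ℝ)^2/π^2 * (1/((c+i)^2)) := by
      intro i
      have hd := hRdist i
      have hq : (0:ℝ) ≤ ((i/M:ℕ):ℝ) := Nat.cast_nonneg _
      have hw : 0 < lam (k+(i:ℤ)) - t := by linarith
      have hne : t - lam (k + (i:ℤ)) ≠ 0 := by intro h0; rw [sub_eq_zero] at h0; rw [← h0] at hw; linarith
      calc Gfun _ ≤ 1/(π^2*(t - lam (k+(i:ℤ)))^2) := Gfun_le _ hne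
        _ = 1/(π^2*(lam (k+(i:ℤ)) - t)^2) := by ring_nf
        _ ≤ (M:ℝ)^2/π^2 * (1/((c+i)^2)) := hkey i _ hd
    have hhL : ∀ i : ℕ, Gfun (t - lam (k - 1 - (i:ℤ))) ≤ (M:ℝ)^2/π^2 * (1/((c+i)^2)) := by
      intro i
      have hd := hLdist i
      have hq : (0:ℝ) ≤ ((i/M:ℕ):ℝ) := Nat.cast_nonneg _
      have hw : 0 < t - lam (k - 1 - (i:ℤ)) := by linarith
      have hne : t - lam (k - 1 - (i:ℤ)) ≠ 0 := ne_of_gt hw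
      calc Gfun _ ≤ 1/(π^2*(t - lam (k - 1 - (i:ℤ)))^2) := Gfun_le _ hne
        _ ≤ (M:ℝ)^2/π^2 * (1/((c+i)^2)) := hkey i _ hd
    have hTbound : (∑' j : ℤ, Gfun (t - lam j)) ≤ 2*(2*(M:ℝ)/(π^2*(a-1))) := by
      apply Summable.tsum_le_of_sum_le (hsummable t)
      intro s
      rw [← Finset.sum_filter_add_sum_filter_not s (fun j => k ≤ j)]
      have hbR : ∑ j ∈ s.filter (fun j => k ≤ j), Gfun (t - lam j) ≤ 2*(M:ℝ)/(π^2*(a-1)) := by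
        have hpt : ∀ j ∈ s.filter (fun j => k ≤ j),
            Gfun (t - lam j) ≤ (M:ℝ)^2/π^2 * (1/((c+((j-k).toNat : ℕ))^2)) := by
          intro j hj
          have hjk : k ≤ j := (Finset.mem_filter.mp hj).2
          have hj2 : j = k + (((j-k).toNat : ℕ):ℤ) := by omega
          calc Gfun (t - lam j) = Gfun (t - lam (k + (((j-k).toNat : ℕ):ℤ))) := by rw [← hj2]
            _ ≤ _ := hhR _
        calc ∑ j ∈ s.filter (fun j => k ≤ j), Gfun (t - lam j)
            ≤ ∑ j ∈ s.filter (fun j => k ≤ j), (M:ℝ)^2/π^2 * (1/((c+((j-k).toNat : ℕ))^2)) :=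
              Finset.sum_le_sum hpt
          _ = ∑ i ∈ (s.filter (fun j => k ≤ j)).image (fun j => (j-k).toNat),
                (M:ℝ)^2/π^2 * (1/((c+i)^2)) := by
              rw [Finset.sum_image]
              intro x hx y hy hxy
              have hx2 : k ≤ x := (Finset.mem_filter.mp hx).2
              have hy2 : k ≤ y := (Finset.mem_filter.mp hy).2
              simp only at hxy
              omega
          _ ≤ ∑' i:ℕ, (M:ℝ)^2/π^2*(1/((c+i)^2)) :=
              Summable.sum_le_tsum _ (fun i _ => by positivity) hsumh2
          _ ≤ 2*(M:ℝ)/(π^2*(a-1)) := htsum2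
      have hbL : ∑ j ∈ s.filter (fun j => ¬ k ≤ j), Gfun (t - lam j) ≤ 2*(M:ℝ)/(π^2*(a-1)) := by
        have hpt : ∀ j ∈ s.filter (fun j => ¬ k ≤ j),
            Gfun (t - lam j) ≤ (M:ℝ)^2/π^2 * (1/((c+((k-1-j).toNat : ℕ))^2)) := by
          intro j hj
          have hjk : ¬ k ≤ j := (Finset.mem_filter.mp hj).2
          have hj2 : j = k - 1 - (((k-1-j).toNat : ℕ):ℤ) := by omega
          calc Gfun (t - lam j) = Gfun (t - lam (k - 1 - (((k-1-j).toNat : ℕ):ℤ))) := by rw [← hj2]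
            _ ≤ _ := hhL _
        calc ∑ j ∈ s.filter (fun j => ¬ k ≤ j), Gfun (t - lam j)
            ≤ ∑ j ∈ s.filter (fun j => ¬ k ≤ j), (M:ℝ)^2/π^2 * (1/((c+((k-1-j).toNat : ℕ))^2)) :=
              Finset.sum_le_sum hpt
          _ = ∑ i ∈ (s.filter (fun j => ¬ k ≤ j)).image (fun j => (k-1-j).toNat),
                (M:ℝ)^2/π^2 * (1/((c+i)^2)) := by
              rw [Finset.sum_image]
              intro x hx y hy hxy
              have hx2 : ¬ k ≤ x := (Finset.mem_filter.mp hx).2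
              have hy2 : ¬ k ≤ y := (Finset.mem_filter.mp hy).2
              simp only at hxy
              omega
          _ ≤ ∑' i:ℕ, (M:ℝ)^2/π^2*(1/((c+i)^2)) :=
              Summable.sum_le_tsum _ (fun i _ => by positivity) hsumh2
          _ ≤ 2*(M:ℝ)/(π^2*(a-1)) := htsum2
      linarith
    have hfinal : A ≤ 4*(M:ℝ)/(π^2*(a-1)) := by
      have h := (hGsum t).1.trans hTbound
      have he : 2*(2*(M:ℝ)/(π^2*(a-1))) = 4*(M:ℝ)/(π^2*(a-1)) := by ring
      linarith
    have ha1 : (0:ℝ) < a - 1 := by linarith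
    have h8 : A*(a-1) ≤ 4*(M:ℝ)/π^2 := by
      have h := mul_le_mul_of_nonneg_right hfinal ha1.le
      calc A*(a-1) ≤ 4*(M:ℝ)/(π^2*(a-1))*(a-1) := h
        _ = 4*(M:ℝ)/π^2 := by field_simp
    have h9 : 4*(M:ℝ)/π^2 ≤ B + 4/π^2 := by
      rw [div_le_iff₀ hπ2, add_mul, div_mul_cancel₀ _ (ne_of_gt hπ2)]
      linarith
    have h10 : 4/π^2 ≤ 1 := by
      rw [div_le_one hπ2]
      nlinarith [Real.pi_gt_three]
    rw [hgap]
    have h12 : a - 1 ≤ 2*B/A := by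
      rw [le_div_iff₀ hA]
      nlinarith
    have h13 : 4*B/A ≤ π^2*B/A :=
      (div_le_div_iff_of_pos_right hA).mpr (by
        have h9pi : 9 ≤ π^2 := by nlinarith [Real.pi_gt_three]
        nlinarith [mul_le_mul_of_nonneg_right h9pi hB.le])
    have h14 : 2*(a-1) ≤ 4*B/A := by
      have he : 2*(2*B/A) = 4*B/A := by ring
      linarith
    linarith
  have hmono2 := hmono.monotone
  have huniv0 : {k : ℤ | (0:ℝ) < lam k - lam (k - 1)} = Set.univ :=
    eq_univ_of_forall (fun k => by
      simp only [mem_setOf_eq, sub_pos]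
      exact hmono (by omega))
  have hS0 : (0:ℝ) ∈ {c : ℝ | 0 ≤ c ∧ {k : ℤ | c < lam k - lam (k - 1)}.Infinite} := by
    refine ⟨le_refl 0, ?_⟩
    rw [huniv0]
    exact infinite_univ
  have hSbdd : BddAbove {c : ℝ | 0 ≤ c ∧ {k : ℤ | c < lam k - lam (k - 1)}.Infinite} := by
    refine ⟨π^2*B/A + 2, ?_⟩
    rintro c ⟨hc0, hcinf⟩
    obtain ⟨k, hk⟩ := hcinf.nonempty
    exact (le_of_lt hk).trans (part3 k)
  have hrange_bdd : BddAbove (Set.range (fun k : ℤ => lam k - lam (k-1))) := by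
    refine ⟨π^2*B/A + 2, ?_⟩
    rintro x ⟨k, rfl⟩
    exact part3 k
  have hgm : gmax lam = sSup {c : ℝ | 0 ≤ c ∧ {k : ℤ | c < lam k - lam (k - 1)}.Infinite} := rfl
  have hπ2 : (0:ℝ) < π^2 := by positivity
  have hmem' : ∀ c', 0 ≤ c' → c' < 4/(π^2*B) →
      c' ∈ {c : ℝ | 0 ≤ c ∧ {k : ℤ | c < lam k - lam (k - 1)}.Infinite} := by
    intro c' h0 hlt
    refine ⟨h0, ?_⟩
    by_contra hfin
    rw [Set.not_infinite] at hfin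
    have hc'pos : 0 < c' := by
      rcases h0.lt_or_eq with h | h
      · exact h
      · exfalso
        rw [← h] at hfin
        rw [huniv0] at hfin
        exact Set.infinite_univ hfin
    obtain ⟨N, hN⟩ := hfin.bddAbove
    have hgapsmall : ∀ k : ℤ, N < k → lam k - lam (k-1) ≤ c' := by
      intro k hk
      by_contra hg
      push_neg at hg
      have : k ≤ N := hN hg
      omega
    have hchain : ∀ j : ℕ, lam (N+1+(j:ℤ)) - lam (N+1) ≤ (j:ℝ)*c' := by
      intro j
      induction j with
      | zero => simp
      | succ j ih =>
        have h1 : lam (N+1+(j:ℤ)+1) - lam (N+1+(j:ℤ)) ≤ c' := by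
          have h2 := hgapsmall (N+1+(j:ℤ)+1) (by omega)
          have he : (N+1+(j:ℤ)+1) - 1 = N+1+(j:ℤ) := by ring
          rw [he] at h2
          exact h2
        have he2 : N+1+((j:ℕ)+1:ℤ) = N+1+(j:ℤ)+1 := by push_cast; ring
        push_cast
        rw [show N+1+((j:ℤ)+1) = N+1+(j:ℤ)+1 by ring]
        linarith
    set n := ⌊1/c'⌋₊ with hndef
    have hK : ∀ k ∈ Finset.Icc (N+1) (N+1+(n:ℤ)), |lam k - (lam (N+1) + 1/2)| ≤ 1/2 := by
      intro k hk
      rw [Finset.mem_Icc] at hk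
      have h1 : lam (N+1) ≤ lam k := hmono2 hk.1
      have hj : k = N+1+(((k-(N+1)).toNat : ℕ) : ℤ) := by omega
      have hj2 : ((k-(N+1)).toNat : ℕ) ≤ n := by omega
      have h2 := hchain (k-(N+1)).toNat
      rw [← hj] at h2
      have h3 : (((k-(N+1)).toNat : ℕ):ℝ)*c' ≤ (n:ℝ)*c' :=
        mul_le_mul_of_nonneg_right (by exact_mod_cast hj2) hc'pos.le
      have h4 : (n:ℝ)*c' ≤ 1 := by
        have h5 : (n:ℝ) ≤ 1/c' := Nat.floor_le (by positivity)
        calc (n:ℝ)*c' ≤ (1/c')*c' := mul_le_mul_of_nonneg_right h5 hc'pos.le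
          _ = 1 := by field_simp
      rw [abs_le]
      constructor <;> linarith
    have hc := hcount _ _ hK
    rw [Int.card_Icc] at hc
    have hcard : (((N+1+(n:ℤ) + 1 - (N+1)).toNat : ℕ) : ℝ) = (n:ℝ) + 1 := by
      have he : N+1+(n:ℤ)+1 - (N+1) = (n:ℤ)+1 := by ring
      rw [he, show ((n:ℤ)+1 : ℤ) = ((n+1 : ℕ) : ℤ) by push_cast; ring, Int.toNat_natCast]
      push_cast
      ring
    rw [hcard] at hc
    have h5 : 1/c' < (n:ℝ)+1 := Nat.lt_floor_add_one _
    have h6 : (1/c')*(4/π^2) < ((n:ℝ)+1)*(4/π^2) :=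
      mul_lt_mul_of_pos_right h5 (by positivity)
    have h7 : (1/c')*(4/π^2) < B := lt_of_lt_of_le h6 hc
    have h8 : 4 < c'*(π^2*B) := by
      have hmul := mul_lt_mul_of_pos_right h7 (by positivity : (0:ℝ) < c'*π^2)
      have he : (1/c')*(4/π^2)*(c'*π^2) = 4 := by field_simp
      rw [he] at hmul
      nlinarith
    have h9 : 4/(π^2*B) < c' := by
      rw [div_lt_iff₀ (by positivity)]
      nlinarith
    linarith
  refine ⟨?_, ?_, part3⟩
  · by_contra hcon
    push_neg at hcon
    have hT : (0:ℝ) < 4/(π^2*B) := by positivity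
    have hmax0 : (0:ℝ) ≤ max (gmax lam) 0 := le_max_right _ _
    have hmaxlt : max (gmax lam) 0 < 4/(π^2*B) := max_lt hcon hT
    have h1 : 0 ≤ (max (gmax lam) 0 + 4/(π^2*B))/2 := by linarith
    have h2 : (max (gmax lam) 0 + 4/(π^2*B))/2 < 4/(π^2*B) := by linarith
    have h3 : gmax lam < (max (gmax lam) 0 + 4/(π^2*B))/2 := by
      have := le_max_left (gmax lam) 0
      linarith
    have h4 := le_csSup hSbdd (hmem' _ h1 h2)
    rw [← hgm] at h4
    linarith
  · rw [hgm]
    apply csSup_le ⟨0, hS0⟩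
    rintro c ⟨hc0, hcinf⟩
    obtain ⟨k, hk⟩ := hcinf.nonempty
    exact (le_of_lt hk).trans (le_ciSup hrange_bdd k)
end

section
/- Let Λ ⊂ ℝ, enumerated in increasing order as Λ = {λ_k : k ∈ ℤ}, be a tight frame-spectrum of Lebesgue measure on [0,1], i.e. there exists A > 0 with ∑_{λ∈Λ} |∫_{[0,1]} f(x) e^{-2πiλx} dx|² = A ∫_{[0,1]} |f(x)|² dx for all f ∈ L²([0,1]). Then g_max(Λ) ≤ sup{g_k(Λ) : k ∈ ℤ} ≤ π² + 2. -/
open MeasureTheory Filter Set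
open scoped Real

noncomputable def myG (t : ℝ) : ℝ :=
  ‖∫ x in Icc (0:ℝ) 1, Complex.exp ((2*π*t*x : ℝ) * Complex.I)‖^2

lemma myG_nonneg (t : ℝ) : 0 ≤ myG t := sq_nonneg _

lemma myG_zero : myG 0 = 1 := by
  unfold myG
  have : ∀ x : ℝ, Complex.exp ((2*π*(0:ℝ)*x : ℝ) * Complex.I) = 1 := by
    intro x; norm_num
  simp_rw [this]
  simp [Real.volume_Icc]


lemma my_exp_int (t : ℝ) (ht : t ≠ 0) :
    myG t = Real.sin (π*t)^2 / (π*t)^2 := by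
  unfold myG
  have hπt : π * t ≠ 0 := mul_ne_zero Real.pi_ne_zero ht
  have hc : ((2*π*t : ℝ) : ℂ) * Complex.I ≠ 0 := by
    simp [Complex.ext_iff, Real.pi_ne_zero, ht]
  have h1 : ∫ x in Icc (0:ℝ) 1, Complex.exp ((2*π*t*x : ℝ) * Complex.I)
      = (Complex.exp (((2*π*t : ℝ) : ℂ) * Complex.I) - 1) / (((2*π*t : ℝ) : ℂ) * Complex.I) := by
    rw [integral_Icc_eq_integral_Ioc, ← intervalIntegral.integral_of_le (zero_le_one)]
    have : ∀ x : ℝ, ((2*π*t*x : ℝ) : ℂ) * Complex.I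
        = (((2*π*t : ℝ) : ℂ) * Complex.I) * (x:ℂ) := by
      intro x; push_cast; ring
    simp_rw [this]
    rw [integral_exp_mul_complex hc]
    simp
  rw [h1]
  rw [norm_div]
  have h2 : ‖(((2*π*t : ℝ) : ℂ) * Complex.I)‖ = |2*π*t| := by
    simp [abs_mul]
  have h3 : ‖Complex.exp (((2*π*t : ℝ) : ℂ) * Complex.I) - 1‖^2
      = (Real.cos (2*π*t) - 1)^2 + Real.sin (2*π*t)^2 := by
    rw [Complex.sq_norm, Complex.normSq_apply]
    simp only [Complex.sub_re, Complex.sub_im, Complex.one_re, Complex.one_im,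
      Complex.exp_ofReal_mul_I_re, Complex.exp_ofReal_mul_I_im]
    ring
  have h4 : (Real.cos (2*π*t) - 1)^2 + Real.sin (2*π*t)^2 = 4 * Real.sin (π*t)^2 := by
    have := Real.sin_sq_add_cos_sq (2*π*t)
    have h5 : Real.sin (π*t)^2 = (1 - Real.cos (2*π*t))/2 := by
      have := Real.sin_sq_eq_half_sub (π*t)
      rw [show 2*(π*t) = 2*π*t by ring] at this
      linarith
    nlinarith
  rw [div_pow, h3, h4, h2]
  rw [sq_abs]
  rw [show (2*π*t)^2 = 4 * (π*t)^2 by ring]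
  field_simp

lemma myG_le (t : ℝ) (ht : t ≠ 0) : myG t ≤ 1 / (π^2 * t^2) := by
  rw [my_exp_int t ht]
  have h1 : (0:ℝ) < (π*t)^2 := by positivity
  rw [div_le_div_iff₀ h1 (by positivity)]
  have := Real.sin_sq_le_one (π*t)
  nlinarith

lemma myG_ge (t : ℝ) (ht : |t| ≤ 1/2) : 4/π^2 ≤ myG t := by
  have hπ := Real.pi_gt_three
  rcases eq_or_ne t 0 with rfl | ht0
  · rw [myG_zero]
    rw [div_le_one (by positivity)]
    nlinarith
  · rw [my_exp_int t ht0]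
    have habs : Real.sin (π*t)^2 = Real.sin (π*|t|)^2 := by
      rcases abs_cases t with ⟨h, _⟩ | ⟨h, _⟩
      · rw [h]
      · rw [h, show π * -t = -(π*t) by ring, Real.sin_neg]; ring
    have hjord : 2/π * (π*|t|) ≤ Real.sin (π*|t|) := by
      apply Real.mul_le_sin (by positivity)
      nlinarith [abs_nonneg t]
    have h2 : 2*|t| ≤ Real.sin (π*|t|) := by
      rw [show 2/π * (π*|t|) = 2*|t| * (π/π) by ring, div_self Real.pi_ne_zero, mul_one] at hjord
      exact hjord
    have h3 : (2*|t|)^2 ≤ Real.sin (π*|t|)^2 := by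
      apply sq_le_sq' _ h2
      nlinarith [abs_nonneg t]
    rw [habs]
    rw [div_le_div_iff₀ (by positivity) (by positivity)]
    have ht2 : |t|^2 = t^2 := sq_abs t
    nlinarith

lemma my_key (lam : ℤ → ℝ) (A : ℝ)
    (htight : ∀ f : ℝ → ℂ, MemLp f 2 (volume.restrict (Icc (0 : ℝ) 1)) →
      (∑' k : ℤ,
          ‖∫ x in Icc (0 : ℝ) 1, f x * Complex.exp ((-2 * π * lam k * x : ℝ) * Complex.I)‖ ^ 2)
        = A * ∫ x in Icc (0 : ℝ) 1, ‖f x‖ ^ 2) (μ : ℝ) :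
    ∑' k : ℤ, myG (μ - lam k) = A := by
  unfold myG
  set f : ℝ → ℂ := fun x => Complex.exp ((2*π*μ*x : ℝ) * Complex.I) with hf
  have hfm : MemLp f 2 (volume.restrict (Icc (0 : ℝ) 1)) := by
    have hcont : Continuous f := by
      apply Complex.continuous_exp.comp
      exact (Complex.continuous_ofReal.comp (by continuity)).mul continuous_const
    have : MemLp f ⊤ (volume.restrict (Icc (0 : ℝ) 1)) := by
      apply memLp_top_of_bound hcont.aestronglyMeasurable 1
      filter_upwards with x
      exact le_of_eq (Complex.norm_exp_ofReal_mul_I _)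
    exact this.mono_exponent le_top
  have h := htight f hfm
  have h2 : ∀ k : ℤ, ∀ x : ℝ, f x * Complex.exp ((-2 * π * lam k * x : ℝ) * Complex.I)
      = Complex.exp ((2*π*(μ - lam k)*x : ℝ) * Complex.I) := by
    intro k x
    rw [hf, ← Complex.exp_add]
    congr 1
    push_cast
    ring
  simp_rw [h2] at h
  rw [h]
  have h3 : ∫ x in Icc (0:ℝ) 1, ‖f x‖ ^ 2 = 1 := by
    have : ∀ x : ℝ, ‖f x‖ ^ 2 = 1 := by
      intro x; rw [hf]; rw [Complex.norm_exp_ofReal_mul_I]; norm_num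
    simp_rw [this]
    simp [Real.volume_Icc]
  rw [h3, mul_one]

section stair
variable (lam : ℤ → ℝ) (N : ℕ) (hwin : ∀ j : ℤ, lam j + 1/2 < lam (j + (N:ℤ)))

include hwin in
lemma my_stair : ∀ (m : ℕ) (j : ℤ), lam j + m/2 ≤ lam (j + (m*N : ℕ)) := by
  intro m
  induction m with
  | zero => intro j; simp
  | succ m ih =>
    intro j
    have h1 := ih j
    have h2 := hwin (j + (m*N : ℕ))
    have h3 : (j + (m*N : ℕ)) + (N:ℤ) = j + ((m+1)*N : ℕ) := by push_cast; ring
    rw [h3] at h2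
    push_cast at h1 h2 ⊢
    linarith
end stair

lemma my_b_bound (g : ℝ) (hg : 2 < g) (N : ℕ) (hN : 1 ≤ N) (M : ℕ) :
    ∑ i ∈ Finset.range M, 4/(π^2*(g-1+(i:ℝ)/N)^2)
      ≤ 4/(π^2*(g-1)^2) + 4*N/(π^2*(g-1)) := by
  have hπ : (0:ℝ) < π^2 := by positivity
  have hg1 : (0:ℝ) < g - 1 := by linarith
  have hN0 : (0:ℝ) < N := by exact_mod_cast hN
  have key : ∀ M : ℕ, ∑ i ∈ Finset.range (M+1), 4/(π^2*(g-1+(i:ℝ)/N)^2)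
      ≤ 4/(π^2*(g-1)^2) + 4*N/π^2 * (1/(g-1) - 1/(g-1+(M:ℝ)/N)) := by
    intro M
    induction M with
    | zero => simp
    | succ M ih =>
      rw [Finset.sum_range_succ]
      have hx : (0:ℝ) < g - 1 + (M:ℝ)/N := by positivity
      have hx1 : (0:ℝ) < g - 1 + ((M:ℝ)+1)/N := by positivity
      have hxy : g - 1 + (M:ℝ)/N ≤ g - 1 + ((M:ℝ)+1)/N := by
        have : (M:ℝ)/N ≤ ((M:ℝ)+1)/N := by gcongr; linarith
        linarith
      have hstep : 4/(π^2*(g-1+((M+1:ℕ):ℝ)/N)^2)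
          ≤ 4*N/π^2 * (1/(g-1+(M:ℝ)/N) - 1/(g-1+((M:ℝ)+1)/N)) := by
        push_cast
        have heq : 4*(N:ℝ)/π^2 * (1/(g-1+(M:ℝ)/N) - 1/(g-1+((M:ℝ)+1)/N))
            = 4/(π^2*((g-1+(M:ℝ)/N)*(g-1+((M:ℝ)+1)/N))) := by
          field_simp
          ring
        rw [heq]
        gcongr 4/?_ <;> nlinarith [mul_le_mul_of_nonneg_right hxy hx1.le]
      have hmono2 : 1/(g-1+((M:ℝ)+1)/N) ≤ 1/(g-1+(M:ℝ)/N) :=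
        one_div_le_one_div_of_le hx hxy
      push_cast at ih hstep ⊢
      linarith
  cases M with
  | zero => simp; positivity
  | succ M =>
    have h := key M
    have hlast : 0 ≤ 1/(g-1+(M:ℝ)/N) := by positivity
    have h2 : 4*(N:ℝ)/π^2 * (1/(g-1) - 1/(g-1+(M:ℝ)/N)) ≤ 4*N/(π^2*(g-1)) := by
      have heq2 : 4*(N:ℝ)/(π^2*(g-1)) = 4*N/π^2 * (1/(g-1)) := by
        field_simp
      rw [heq2]
      apply mul_le_mul_of_nonneg_left _ (by positivity)
      linarith
    linarith

section main
variable (lam : ℤ → ℝ) (hmono : StrictMono lam) (A : ℝ) (hA : 0 < A)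
  (hkey : ∀ μ : ℝ, ∑' k : ℤ, myG (μ - lam k) = A)

include hA hkey in
lemma my_summable (μ : ℝ) : Summable (fun k : ℤ => myG (μ - lam k)) := by
  by_contra h
  have := tsum_eq_zero_of_not_summable h
  rw [hkey μ] at this
  linarith

include hA hkey in
lemma my_A_ge_one : 1 ≤ A := by
  have h := Summable.le_tsum (my_summable lam A hA hkey (lam 0)) 0
    (fun j _ => myG_nonneg _)
  simp only [sub_self, myG_zero] at h
  rw [hkey (lam 0)] at h
  exact h

include hmono hA hkey in
lemma my_window : ∀ j : ℤ, lam j + 1/2 < lam (j + (⌈A * π^2 / 4⌉₊ : ℕ)) := by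
  intro j
  set N : ℕ := ⌈A * π^2 / 4⌉₊ with hN
  by_contra hcon
  push_neg at hcon
  have hπ := Real.pi_gt_three
  -- the finset {j, j+1, ..., j+N}
  set s : Finset ℤ := Finset.map ⟨fun i : ℕ => j + (i : ℤ), fun a b hab => by exact_mod_cast add_left_cancel hab⟩
    (Finset.range (N+1)) with hs
  have hmem : ∀ i : ℕ, i ≤ N → |lam j - lam (j + (i:ℤ))| ≤ 1/2 := by
    intro i hi
    have h1 : lam j ≤ lam (j + (i:ℤ)) := hmono.monotone (by omega)
    have h2 : lam (j + (i:ℤ)) ≤ lam (j + (N:ℤ)) := hmono.monotone (by omega)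
    rw [abs_le]
    constructor <;> [linarith; linarith]
  have hsumle : ∑ k ∈ s, myG (lam j - lam k) ≤ A := by
    rw [← hkey (lam j)]
    exact Summable.sum_le_tsum s (fun i _ => myG_nonneg _) (my_summable lam A hA hkey (lam j))
  have hsumge : (N+1 : ℝ) * (4/π^2) ≤ ∑ k ∈ s, myG (lam j - lam k) := by
    rw [hs, Finset.sum_map]
    have : ∀ i ∈ Finset.range (N+1), (4/π^2 : ℝ) ≤ myG (lam j - lam (j + (i:ℤ))) := by
      intro i hi
      exact myG_ge _ (hmem i (by simpa [Nat.lt_succ_iff] using hi))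
    calc (N+1 : ℝ) * (4/π^2) = ∑ _i ∈ Finset.range (N+1), (4/π^2 : ℝ) := by
          rw [Finset.sum_const, Finset.card_range]; push_cast; ring
      _ ≤ _ := Finset.sum_le_sum this
  have hNge : A * π^2 / 4 ≤ (N : ℝ) := Nat.le_ceil _
  have hπ2 : (0:ℝ) < π^2 := by positivity
  have h5 : ((N:ℝ)+1) * (4/π^2) * π^2 = 4*((N:ℝ)+1) := by field_simp
  have h6 := hsumge.trans hsumle
  nlinarith [mul_le_mul_of_nonneg_right h6 hπ2.le, mul_le_mul_of_nonneg_right hNge hπ2.le]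
end main

set_option maxHeartbeats 2000000 in
theorem stmt9 (lam : ℤ → ℝ) (hmono : StrictMono lam) (A : ℝ) (hA : 0 < A)
    (htight : ∀ f : ℝ → ℂ, MemLp f 2 (volume.restrict (Icc (0 : ℝ) 1)) →
      (∑' k : ℤ,
          ‖∫ x in Icc (0 : ℝ) 1, f x * Complex.exp ((-2 * π * lam k * x : ℝ) * Complex.I)‖ ^ 2)
        = A * ∫ x in Icc (0 : ℝ) 1, ‖f x‖ ^ 2) :
    gmax lam ≤ (⨆ k : ℤ, (lam k - lam (k - 1))) ∧
      ∀ k : ℤ, lam k - lam (k - 1) ≤ π ^ 2 + 2 := by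
  have hkey : ∀ μ : ℝ, ∑' k : ℤ, myG (μ - lam k) = A := my_key lam A htight
  have hπ := Real.pi_gt_three
  have hπ2 : (0:ℝ) < π^2 := by positivity
  have hA1 : 1 ≤ A := my_A_ge_one lam A hA hkey
  set N : ℕ := ⌈A * π^2 / 4⌉₊ with hNdef
  have hN1 : 1 ≤ N := Nat.one_le_iff_ne_zero.mpr (by
    simp only [hNdef, ne_eq, Nat.ceil_eq_zero, not_le]
    positivity)
  have hN0 : (0:ℝ) < N := by exact_mod_cast hN1
  have hwin := my_window lam hmono A hA hkey
  have hstair := my_stair lam N hwin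
  have main : ∀ k : ℤ, lam k - lam (k - 1) ≤ π ^ 2 + 2 := by
    intro k
    by_contra hcon
    push_neg at hcon
    set g : ℝ := lam k - lam (k-1) with hg
    set c : ℝ := (lam k + lam (k-1))/2 with hc
    have hg2 : 2 < g := by nlinarith
    have hg1 : (0:ℝ) < g - 1 := by linarith
    set b : ℕ → ℝ := fun i => 4/(π^2*(g-1+(i:ℝ)/N)^2) with hb
    have hbnn : ∀ i : ℕ, 0 ≤ b i := by
      intro i
      have : (0:ℝ) < g-1+(i:ℝ)/N := by positivity
      positivity
    -- distance estimates
    have hdiv : ∀ i : ℕ, (i:ℝ)/N - 1 ≤ ((i / N : ℕ) : ℝ) := by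
      intro i
      have h1 : i < N * (i / N) + N := by
        have := Nat.div_add_mod i N
        have := Nat.mod_lt i (show 0 < N by omega)
        omega
      have h2 : (i:ℝ) < N * ((i/N : ℕ):ℝ) + N := by exact_mod_cast h1
      rw [sub_le_iff_le_add, div_le_iff₀ hN0]
      nlinarith
    have hright : ∀ i : ℕ, (g - 1 + (i:ℝ)/N)/2 ≤ lam (k + (i:ℤ)) - c := by
      intro i
      have h1 : lam k + (((i/N : ℕ)):ℝ)/2 ≤ lam (k + (((i/N)*N : ℕ):ℤ)) := hstair (i/N) k
      have h2 : lam (k + (((i/N)*N : ℕ):ℤ)) ≤ lam (k + (i:ℤ)) := by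
        apply hmono.monotone
        have := Nat.div_mul_le_self i N
        omega
      have h3 : lam k - c = g/2 := by rw [hc, hg]; ring
      have h4 := hdiv i
      have h5 : lam k + ((i:ℝ)/N - 1)/2 ≤ lam (k + (i:ℤ)) := by
        have : ((i:ℝ)/N - 1)/2 ≤ (((i/N : ℕ)):ℝ)/2 := by linarith
        linarith
      linarith
    have hleft : ∀ i : ℕ, (g - 1 + (i:ℝ)/N)/2 ≤ c - lam (k - 1 - (i:ℤ)) := by
      intro i
      have h1 : lam (k - 1 - (((i/N)*N : ℕ):ℤ)) + (((i/N:ℕ)):ℝ)/2 ≤ lam (k-1) := by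
        have := hstair (i/N) (k - 1 - (((i/N)*N : ℕ):ℤ))
        rw [show k - 1 - (((i/N)*N : ℕ):ℤ) + (((i/N)*N:ℕ):ℤ) = k - 1 by ring] at this
        exact this
      have h2 : lam (k - 1 - (i:ℤ)) ≤ lam (k - 1 - (((i/N)*N : ℕ):ℤ)) := by
        apply hmono.monotone
        have := Nat.div_mul_le_self i N
        omega
      have h3 : c - lam (k-1) = g/2 := by rw [hc, hg]; ring
      have h4 := hdiv i
      linarith
    -- pointwise bound on terms
    have hterm : ∀ (d : ℝ) (i : ℕ), (g - 1 + (i:ℝ)/N)/2 ≤ |d| → myG d ≤ b i := by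
      intro d i hd
      have hgi : (0:ℝ) < g - 1 + (i:ℝ)/N := by positivity
      have hd0 : d ≠ 0 := by
        intro h
        rw [h, abs_zero] at hd
        linarith
      calc myG d ≤ 1/(π^2*d^2) := myG_le d hd0
        _ ≤ 4/(π^2*(g-1+(i:ℝ)/N)^2) := by
            rw [div_le_div_iff₀ (by positivity) (by positivity)]
            have h6 : ((g - 1 + (i:ℝ)/N)/2)^2 ≤ d^2 := by
              rw [← sq_abs d]
              apply sq_le_sq' _ hd
              nlinarith [abs_nonneg d]
            nlinarith
    -- bound any finite partial sum
    have hB : ∀ s : Finset ℤ, ∑ j ∈ s, myG (c - lam j)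
        ≤ 2*(4/(π^2*(g-1)^2) + 4*N/(π^2*(g-1))) := by
      intro s
      have hfinbnd : ∀ t : Finset ℕ, ∑ i ∈ t, b i
          ≤ 4/(π^2*(g-1)^2) + 4*N/(π^2*(g-1)) := by
        intro t
        calc ∑ i ∈ t, b i ≤ ∑ i ∈ Finset.range (t.sup id + 1), b i := by
              apply Finset.sum_le_sum_of_subset_of_nonneg
              · intro i hi
                simp only [Finset.mem_range]
                exact Nat.lt_succ_of_le (Finset.le_sup (f := id) hi)
              · intro i _ _; exact hbnn i
          _ ≤ _ := my_b_bound g hg2 N hN1 _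
      rw [← Finset.sum_filter_add_sum_filter_not s (fun j => k ≤ j)]
      have hb1 : ∑ j ∈ s.filter (fun j => k ≤ j), myG (c - lam j)
          ≤ 4/(π^2*(g-1)^2) + 4*N/(π^2*(g-1)) := by
        set e : ℤ → ℕ := fun j => (j - k).toNat with he
        calc ∑ j ∈ s.filter (fun j => k ≤ j), myG (c - lam j)
            ≤ ∑ j ∈ s.filter (fun j => k ≤ j), b (e j) := by
              apply Finset.sum_le_sum
              intro j hj
              have hjk : k ≤ j := (Finset.mem_filter.mp hj).2
              have hje : j = k + ((e j : ℕ) : ℤ) := by simp only [he]; omega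
              have h := hterm (c - lam (k + ((e j:ℕ):ℤ))) (e j) (by
                rw [abs_sub_comm]
                calc (g - 1 + ((e j : ℕ):ℝ)/N)/2 ≤ lam (k + ((e j:ℕ):ℤ)) - c := hright (e j)
                  _ ≤ |lam (k + ((e j:ℕ):ℤ)) - c| := le_abs_self _)
              rw [← hje] at h
              exact h
          _ = ∑ i ∈ (s.filter (fun j => k ≤ j)).image e, b i := by
              rw [Finset.sum_image]
              intro x hx y hy hxy
              have hx' : k ≤ x := (Finset.mem_filter.mp hx).2
              have hy' : k ≤ y := (Finset.mem_filter.mp hy).2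
              simp only [he] at hxy
              omega
          _ ≤ _ := hfinbnd _
      have hb2 : ∑ j ∈ s.filter (fun j => ¬ k ≤ j), myG (c - lam j)
          ≤ 4/(π^2*(g-1)^2) + 4*N/(π^2*(g-1)) := by
        set e : ℤ → ℕ := fun j => (k - 1 - j).toNat with he
        calc ∑ j ∈ s.filter (fun j => ¬ k ≤ j), myG (c - lam j)
            ≤ ∑ j ∈ s.filter (fun j => ¬ k ≤ j), b (e j) := by
              apply Finset.sum_le_sum
              intro j hj
              have hjk : ¬ k ≤ j := (Finset.mem_filter.mp hj).2
              have hje : j = k - 1 - ((e j : ℕ) : ℤ) := by simp only [he]; omega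
              have h := hterm (c - lam (k - 1 - ((e j:ℕ):ℤ))) (e j) (by
                calc (g - 1 + ((e j : ℕ):ℝ)/N)/2 ≤ c - lam (k - 1 - ((e j:ℕ):ℤ)) := hleft (e j)
                  _ ≤ |c - lam (k - 1 - ((e j:ℕ):ℤ))| := le_abs_self _)
              rw [← hje] at h
              exact h
          _ = ∑ i ∈ (s.filter (fun j => ¬ k ≤ j)).image e, b i := by
              rw [Finset.sum_image]
              intro x hx y hy hxy
              have hx' : ¬ k ≤ x := (Finset.mem_filter.mp hx).2
              have hy' : ¬ k ≤ y := (Finset.mem_filter.mp hy).2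
              simp only [he] at hxy
              omega
          _ ≤ _ := hfinbnd _
      linarith
    -- conclude
    have htsum : A ≤ 2*(4/(π^2*(g-1)^2) + 4*N/(π^2*(g-1))) := by
      rw [← hkey c]
      exact Summable.tsum_le_of_sum_le (my_summable lam A hA hkey c) hB
    have hNlt : (N:ℝ) < A*π^2/4 + 1 := Nat.ceil_lt_add_one (by positivity)
    have e1 : (2*(4/(π^2*(g-1)^2) + 4*(N:ℝ)/(π^2*(g-1)))) * (π^2*(g-1)^2)
        = 8 + 8*N*(g-1) := by field_simp; ring
    have c0 : A * (π^2*(g-1)^2) ≤ 8 + 8*(N:ℝ)*(g-1) := by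
      calc A * (π^2*(g-1)^2) ≤ (2*(4/(π^2*(g-1)^2) + 4*(N:ℝ)/(π^2*(g-1)))) * (π^2*(g-1)^2) :=
            mul_le_mul_of_nonneg_right htsum (by positivity)
        _ = _ := e1
    have c1 : 8*(N:ℝ)*(g-1) ≤ (2*A*π^2+8)*(g-1) := by
      apply mul_le_mul_of_nonneg_right _ hg1.le
      nlinarith
    have c2 : A*(π^2*(g-1)^2) ≤ 8 + (2*A*π^2+8)*(g-1) := by linarith
    have hu : π^2 + 1 < g - 1 := by linarith
    have c3 : A*π^2*(π^2+1)*(g-1) ≤ A*(π^2*(g-1)^2) := by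
      have h1 : (π^2+1)*(g-1) ≤ (g-1)*(g-1) := by nlinarith
      have h2 : 0 ≤ A*π^2 := by positivity
      nlinarith
    have hp9 : (9:ℝ) < π^2 := by nlinarith
    have d0 : (72:ℝ) ≤ π^2*(π^2-1) := by nlinarith [hp9]
    have d0' : π^2*(π^2-1) ≤ A*(π^2*(π^2-1)) := by
      nlinarith [mul_le_mul_of_nonneg_right hA1 (show (0:ℝ) ≤ π^2*(π^2-1) by nlinarith [hp9])]
    have d1 : (72:ℝ)*(g-1) ≤ A*π^2*(π^2-1)*(g-1) := by
      have : (72:ℝ) ≤ A*(π^2*(π^2-1)) := le_trans d0 d0'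
      nlinarith [mul_le_mul_of_nonneg_right this hg1.le]
    have d2 : A*π^2*(π^2-1)*(g-1) ≤ 8 + 8*(g-1) := by linarith [c2, c3]
    linarith [d1, d2, hu, hp9]
  constructor
  · unfold gmax
    have hbdd : BddAbove (Set.range fun k : ℤ => lam k - lam (k-1)) := by
      refine ⟨π^2+2, ?_⟩
      rintro x ⟨k, rfl⟩
      exact main k
    apply Real.sSup_le
    · rintro x ⟨hx0, hxinf⟩
      obtain ⟨k, hk⟩ := hxinf.nonempty
      exact le_trans (le_of_lt hk) (le_ciSup hbdd k)
    · have h0 : lam 0 - lam (0-1) ≤ ⨆ k : ℤ, (lam k - lam (k-1)) := le_ciSup hbdd 0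
      have : (0:ℝ) < lam 0 - lam (0-1) := sub_pos.mpr (hmono (by omega))
      linarith
  · exact main
end

section
/- For all ξ₁, ξ₂ ∈ ℝ, ∑_{n∈ℤ} [sin π(ξ₁+n)/(π(ξ₁+n))] · [sin π(ξ₂+n)/(π(ξ₂+n))] = sin((ξ₂−ξ₁)π)/((ξ₂−ξ₁)π), where the normalized sinc value sin(πx)/(πx) is interpreted as 1 when the argument x is 0 (in particular the right-hand side equals 1 when ξ₁ = ξ₂). -/
open scoped Real
open MeasureTheory AddCircle

/-- Normalized sinc: `sin(πx)/(πx)`, interpreted as `1` at `x = 0`. -/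
noncomputable def nsinc (x : ℝ) : ℝ := if x = 0 then 1 else Real.sin (π * x) / (π * x)

namespace Stmt15Aux

instance : Fact ((0:ℝ) < 1) := ⟨one_pos⟩

lemma key_integral (c : ℝ) :
    (∫ x in (-(1/2) : ℝ)..(1/2), Complex.exp (2 * π * Complex.I * c * x)) = (nsinc c : ℂ) := by
  rcases eq_or_ne c 0 with rfl | hc
  · norm_num [nsinc]
  · have hc0 : (c : ℂ) ≠ 0 := Complex.ofReal_ne_zero.2 hc
    have hπ : (π : ℂ) ≠ 0 := Complex.ofReal_ne_zero.2 Real.pi_ne_zero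
    have hc' : (2 * (π:ℂ) * Complex.I * c) ≠ 0 := by
      simp [hπ, Complex.I_ne_zero, hc0]
    rw [integral_exp_mul_complex hc', nsinc, if_neg hc]
    have h1 : (2:ℂ) * π * Complex.I * c * ((1/2:ℝ):ℂ) = (π * c) * Complex.I := by
      push_cast; ring
    have h2 : (2:ℂ) * π * Complex.I * c * ((-(1/2):ℝ):ℂ) = (-(π * c)) * Complex.I := by
      push_cast; ring
    rw [h1, h2, Complex.exp_mul_I, Complex.exp_mul_I, Complex.sin_neg, Complex.cos_neg]
    have : ((Real.sin (π * c) / (π * c) : ℝ) : ℂ) = Complex.sin (π * c) / (π * c) := by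
      push_cast [Complex.ofReal_sin]; ring
    rw [this]
    field_simp
    ring

/-- The function `x ↦ exp(2πiξx)` on `[-1/2, 1/2]`, as a function on `AddCircle 1`. -/
noncomputable def ef (ξ : ℝ) : AddCircle (1:ℝ) → ℂ :=
  AddCircle.liftIoc 1 (-(1/2)) (fun x : ℝ => Complex.exp (2 * π * Complex.I * ξ * x))

lemma ef_fourierCoeff (ξ : ℝ) (n : ℤ) :
    fourierCoeff (ef ξ) n = (nsinc (ξ - n) : ℂ) := by
  rw [ef, fourierCoeff_eq_intervalIntegral _ n (-(1/2))]
  have hcong : (∫ x in (-(1/2):ℝ)..(-(1/2)+1), (fourier (-n)) (x : AddCircle (1:ℝ)) •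
        (AddCircle.liftIoc 1 (-(1/2)) fun x : ℝ => Complex.exp (2*π*Complex.I*ξ*x)) ↑x)
      = ∫ x in (-(1/2):ℝ)..(-(1/2)+1), Complex.exp (2*π*Complex.I*((ξ-(n:ℝ):ℝ):ℂ)*x) := by
    refine intervalIntegral.integral_congr_ae (MeasureTheory.ae_of_all _ fun x hx => ?_)
    rw [Set.uIoc_of_le (by norm_num : (-(1/2):ℝ) ≤ -(1/2)+1)] at hx
    rw [AddCircle.liftIoc_coe_apply hx, smul_eq_mul, fourier_coe_apply, ← Complex.exp_add]
    push_cast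
    ring_nf
  rw [hcong, show (-(1/2):ℝ)+1 = 1/2 by norm_num, key_integral (ξ - n)]
  norm_num

lemma ef_memℒp (ξ : ℝ) : MemLp (ef ξ) 2 (@haarAddCircle 1 _) := by
  have hmeas : Measurable (ef ξ) := by
    have h1 : Measurable (AddCircle.equivIoc (1:ℝ) (-(1/2))) :=
      (AddCircle.measurableEquivIoc 1 (-(1/2))).measurable
    have h2 : Continuous (Set.restrict (Set.Ioc (-(1/2):ℝ) (-(1/2)+1))
        (fun x : ℝ => Complex.exp (2 * π * Complex.I * ξ * x))) := by
      exact (show Continuous (fun x : ℝ => Complex.exp (2 * π * Complex.I * ξ * x)) by fun_prop).comp continuous_subtype_val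
    exact h2.measurable.comp h1
  refine MemLp.of_bound hmeas.aestronglyMeasurable 1 (Filter.Eventually.of_forall fun x => ?_)
  rw [ef]
  simp only [AddCircle.liftIoc, Function.comp_apply, Set.restrict_apply]
  rw [Complex.norm_exp]
  simp

end Stmt15Aux

open Stmt15Aux
theorem stmt15 (ξ₁ ξ₂ : ℝ) :
    ∑' n : ℤ, nsinc (ξ₁ + n) * nsinc (ξ₂ + n) = nsinc (ξ₂ - ξ₁) := by
  classical
  set f : Lp ℂ 2 (@haarAddCircle 1 _) := (ef_memℒp ξ₁).toLp (ef ξ₁) with hf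
  set g : Lp ℂ 2 (@haarAddCircle 1 _) := (ef_memℒp ξ₂).toLp (ef ξ₂) with hg
  -- Fourier coefficients of f and g
  have hcf : ∀ ξ : ℝ, fourierCoeff (((ef_memℒp ξ).toLp (ef ξ) : Lp ℂ 2 (@haarAddCircle 1 _)) :
      AddCircle (1:ℝ) → ℂ) = fourierCoeff (ef ξ) := by
    intro ξ
    funext n
    refine integral_congr_ae ?_
    filter_upwards [(ef_memℒp ξ).coeFn_toLp] with t ht
    rw [ht]
  -- inner products with basis vectors
  have hb : ∀ n : ℤ, (@fourierBasis 1 _).repr f n = (nsinc (ξ₁ - n) : ℂ) := by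
    intro n
    rw [fourierBasis_repr, hf, hcf ξ₁, ef_fourierCoeff]
  have hb' : ∀ n : ℤ, (@fourierBasis 1 _).repr g n = (nsinc (ξ₂ - n) : ℂ) := by
    intro n
    rw [fourierBasis_repr, hg, hcf ξ₂, ef_fourierCoeff]
  -- the inner product of f and g
  have hinner : (inner ℂ f g : ℂ) = (nsinc (ξ₂ - ξ₁) : ℂ) := by
    rw [MeasureTheory.L2.inner_def]
    have : (∫ t, (inner ℂ (f t) (g t) : ℂ) ∂(@haarAddCircle 1 _))
        = ∫ t, ef (ξ₂ - ξ₁) t ∂(@haarAddCircle 1 _) := by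
      refine integral_congr_ae ?_
      filter_upwards [(ef_memℒp ξ₁).coeFn_toLp, (ef_memℒp ξ₂).coeFn_toLp] with t h1 h2
      simp only [hf, hg]
      rw [h1, h2, RCLike.inner_apply, mul_comm]
      show (starRingEnd ℂ) (ef ξ₁ t) * ef ξ₂ t = ef (ξ₂ - ξ₁) t
      simp only [ef, AddCircle.liftIoc, Function.comp_apply, Set.restrict_apply]
      rw [← Complex.exp_conj, ← Complex.exp_add]
      congr 1
      have : (starRingEnd ℂ) ((2:ℂ) * π * Complex.I * ξ₁ *
          ((AddCircle.equivIoc 1 (-(1/2)) t : ℝ) : ℂ))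
          = -((2:ℂ) * π * Complex.I * ξ₁ * ((AddCircle.equivIoc 1 (-(1/2)) t : ℝ) : ℂ)) := by
        simp only [map_mul, Complex.conj_I, Complex.conj_ofReal, map_ofNat]
        ring
      rw [this]
      push_cast
      ring
    rw [this]
    have h0 : (∫ t, ef (ξ₂ - ξ₁) t ∂(@haarAddCircle 1 _)) = fourierCoeff (ef (ξ₂ - ξ₁)) 0 := by
      rw [fourierCoeff]
      refine (integral_congr_ae (Filter.Eventually.of_forall fun t => ?_)).symm
      rw [neg_zero, fourier_zero, one_smul]
    rw [h0, ef_fourierCoeff]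
    norm_num
  -- Parseval
  have hsum := (@fourierBasis 1 _).hasSum_inner_mul_inner f g
  have hterm : ∀ n : ℤ, (inner ℂ f ((@fourierBasis 1 _) n) : ℂ) * inner ℂ ((@fourierBasis 1 _) n) g
      = ((nsinc (ξ₁ - n) * nsinc (ξ₂ - n) : ℝ) : ℂ) := by
    intro n
    have e1 : (inner ℂ ((@fourierBasis 1 _) n) f : ℂ) = (nsinc (ξ₁ - n) : ℂ) :=
      ((@fourierBasis 1 _).repr_apply_apply f n).symm.trans (hb n)
    have e2 : (inner ℂ ((@fourierBasis 1 _) n) g : ℂ) = (nsinc (ξ₂ - n) : ℂ) :=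
      ((@fourierBasis 1 _).repr_apply_apply g n).symm.trans (hb' n)
    rw [← inner_conj_symm f ((@fourierBasis 1 _) n), e1, e2, Complex.conj_ofReal]
    push_cast
    ring
  rw [hinner] at hsum
  rw [funext hterm] at hsum
  have hreal : HasSum (fun n : ℤ => nsinc (ξ₁ - n) * nsinc (ξ₂ - n)) (nsinc (ξ₂ - ξ₁)) :=
    Complex.hasSum_ofReal.mp hsum
  have hneg : HasSum (fun n : ℤ => nsinc (ξ₁ + n) * nsinc (ξ₂ + n)) (nsinc (ξ₂ - ξ₁)) := by
    have h2 := ((Equiv.neg ℤ).hasSum_iff).mpr hreal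
    simpa [Function.comp_def, sub_neg_eq_add, Int.cast_neg] using h2
  exact hneg.tsum_eq
end

section
/- For all real x ≥ 1/2, x · ζ(2, x) ≤ π²/4, with equality at x = 1/2, where ζ(2, x) = ∑_{n=0}^∞ 1/(x+n)² is the Hurwitz zeta function at s = 2. -/
open scoped Real

lemma base_summable : Summable (fun n : ℕ => 1/((n:ℝ)+1)^2) := by
  have h := (summable_nat_add_iff 1).mpr hasSum_zeta_two.summable
  apply h.congr; intro n; push_cast; ring_nf

lemma odd_hasSum : HasSum (fun n : ℕ => 1/(2*(n:ℝ)+1)^2) (π^2/8) := by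
  have hall := hasSum_zeta_two
  have heven : HasSum (fun k : ℕ => (1:ℝ)/(2*(k:ℝ))^2) (π^2/24) := by
    have h := hall.mul_left (1/4)
    have h2 : (fun k : ℕ => (1/4) * ((1:ℝ)/(k:ℝ)^2)) = fun k : ℕ => (1:ℝ)/(2*(k:ℝ))^2 := by
      funext k; field_simp; ring
    rw [h2] at h
    have : (1/4) * (π^2/6) = π^2/24 := by ring
    rwa [this] at h
  have hodd : Summable (fun k : ℕ => (1:ℝ)/(2*(k:ℝ)+1)^2) := by
    refine Summable.of_nonneg_of_le (fun n => by positivity) (fun n => ?_) base_summable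
    apply one_div_le_one_div_of_le (by positivity)
    have : (0:ℝ) ≤ (n:ℝ) := Nat.cast_nonneg n
    nlinarith
  obtain ⟨t, ht⟩ := hodd
  have hcomb : HasSum (fun n : ℕ => (1:ℝ)/(n:ℝ)^2) (π^2/24 + t) := by
    refine HasSum.even_add_odd ?_ ?_
    · have : (fun k : ℕ => (1:ℝ)/((2*k : ℕ):ℝ)^2) = fun k : ℕ => (1:ℝ)/(2*(k:ℝ))^2 := by
        funext k; push_cast; ring_nf
      rw [this]; exact heven
    · have : (fun k : ℕ => (1:ℝ)/((2*k+1 : ℕ):ℝ)^2) = fun k : ℕ => (1:ℝ)/(2*(k:ℝ)+1)^2 := by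
        funext k; push_cast; ring_nf
      rw [this]; exact ht
  have := hcomb.unique hall
  have ht' : t = π^2/8 := by linarith
  rwa [ht'] at ht

lemma half_hasSum : HasSum (fun n : ℕ => 1/((1/2 : ℝ)+n)^2) (π^2/2) := by
  have h := odd_hasSum.mul_left 4
  have h2 : (fun n : ℕ => 4 * (1/(2*(n:ℝ)+1)^2)) = fun n : ℕ => 1/((1/2 : ℝ)+n)^2 := by
    funext n
    have h1 : (2*(n:ℝ)+1)^2 ≠ 0 := by positivity
    have h2 : ((1/2 : ℝ)+n)^2 ≠ 0 := by positivity
    field_simp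
    ring
  rw [h2] at h
  have : 4 * (π^2/8) = π^2/2 := by ring
  rwa [this] at h

lemma shift_summable {x : ℝ} (hx : 1/2 ≤ x) : Summable (fun n : ℕ => 1/(x+(n:ℝ))^2) := by
  refine Summable.of_nonneg_of_le (fun n => by positivity) (fun n => ?_)
    (base_summable.mul_left 4)
  have hn : (0:ℝ) ≤ (n:ℝ) := Nat.cast_nonneg n
  rw [mul_one_div, div_le_div_iff₀ (by positivity) (by positivity)]
  nlinarith

lemma telescope {a : ℝ} (ha : 0 < a) :
    HasSum (fun n : ℕ => 1/(a+n) - 1/(a+n+1)) (1/a) := by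
  rw [hasSum_iff_tendsto_nat_of_nonneg]
  · have h1 : ∀ n : ℕ, ∑ i ∈ Finset.range n, (1/(a+i) - 1/(a+i+1)) = 1/a - 1/(a+n) := by
      intro n
      have := Finset.sum_range_sub' (f := fun i : ℕ => 1/(a+i)) n
      simpa [add_assoc] using this
    simp only [h1]
    have h2 : Filter.Tendsto (fun n : ℕ => 1/(a+n)) Filter.atTop (nhds 0) := by
      simp only [one_div]
      exact tendsto_inv_atTop_zero.comp
        (Filter.tendsto_atTop_add_const_left _ a tendsto_natCast_atTop_atTop)
    simpa using Filter.Tendsto.sub tendsto_const_nhds h2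
  · intro n
    have h0 : (0:ℝ) < a + n := by positivity
    rw [sub_nonneg]
    apply one_div_le_one_div_of_le h0; linarith

lemma pointwise {x : ℝ} (hx : 1/2 ≤ x) (n : ℕ) :
    x*(1/(x+((n:ℝ)+1))^2) - (1/2)*(1/((1/2:ℝ)+((n:ℝ)+1))^2)
      ≤ (x-1/2) * (1/(x+1/2+(n:ℝ)) - 1/(x+1/2+(n:ℝ)+1)) := by
  set m : ℝ := (n:ℝ)+1 with hm_def
  have hm : 1 ≤ m := by simp [hm_def, Nat.cast_nonneg]
  have hc : (0:ℝ) ≤ x - 1/2 := by linarith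
  have hxm : (0:ℝ) < x + m := by linarith
  have h1 : (0:ℝ) < x+1/2+(n:ℝ) := by linarith [Nat.cast_nonneg (α := ℝ) n]
  have h2 : (0:ℝ) < x+1/2+(n:ℝ)+1 := by linarith
  have hrhs : 1/(x+1/2+(n:ℝ)) - 1/(x+1/2+(n:ℝ)+1)
      = 1/((x+1/2+(n:ℝ))*(x+1/2+(n:ℝ)+1)) := by
    field_simp; ring
  rw [hrhs, mul_one_div, mul_one_div, mul_one_div]
  have hq1 : (0:ℝ) < (1/2+m) := by linarith
  rw [div_sub_div _ _ (by positivity : ((x+m)^2:ℝ) ≠ 0) (by positivity : (((1/2:ℝ)+m)^2:ℝ) ≠ 0),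
      div_le_div_iff₀ (by positivity) (by positivity)]
  have hnm : x+1/2+(n:ℝ) = x + m - 1/2 := by rw [hm_def]; ring
  have hnm2 : x+1/2+(n:ℝ)+1 = x + m + 1/2 := by rw [hm_def]; ring
  rw [hnm]
  have bracket : (2*m^2-x)*((x+m)^2-1/4)/2 ≤ (x+m)^2*(m+1/2)^2 := by nlinarith [sq_nonneg (x+m), sq_nonneg m, sq_nonneg (m-1)]
  nlinarith [mul_le_mul_of_nonneg_left bracket hc, sq_nonneg (x+m)]

theorem stmt17 :
    (∀ x : ℝ, 1 / 2 ≤ x → x * ∑' n : ℕ, 1 / (x + n) ^ 2 ≤ π ^ 2 / 4) ∧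
    (1 / 2 : ℝ) * ∑' n : ℕ, 1 / ((1 / 2 : ℝ) + n) ^ 2 = π ^ 2 / 4 := by
  constructor
  · intro x hx
    have hx0 : (0:ℝ) < x := by linarith
    have hS := shift_summable hx
    have hA : HasSum (fun n : ℕ => x*(1/(x+(n:ℝ))^2)) (x * ∑' n : ℕ, 1/(x+(n:ℝ))^2) :=
      hS.hasSum.mul_left x
    have hB : HasSum (fun n : ℕ => (1/2)*(1/((1/2:ℝ)+(n:ℝ))^2)) (π^2/4) := by
      have h := half_hasSum.mul_left (1/2)
      have : (1/2) * (π^2/2) = π^2/4 := by ring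
      rwa [this] at h
    have hD : HasSum (fun n : ℕ => (1/2)*(1/((1/2:ℝ)+(n:ℝ))^2) - x*(1/(x+(n:ℝ))^2))
        (π^2/4 - x * ∑' n : ℕ, 1/(x+(n:ℝ))^2) := hB.sub hA
    set a : ℕ → ℝ := fun n => (1/2)*(1/((1/2:ℝ)+(n:ℝ))^2) - x*(1/(x+(n:ℝ))^2) with ha_def
    suffices h : 0 ≤ π^2/4 - x * ∑' n : ℕ, 1/(x+(n:ℝ))^2 by linarith
    rw [← hD.tsum_eq, Summable.tsum_eq_zero_add hD.summable]
    have ha0 : a 0 = 2 - 1/x := by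
      simp only [ha_def, Nat.cast_zero, add_zero]
      field_simp
    have htail : -((x-1/2)*(1/(x+1/2))) ≤ ∑' n : ℕ, a (n+1) := by
      have hb : HasSum (fun n : ℕ => (x-1/2)*(1/(x+1/2+(n:ℝ)) - 1/(x+1/2+(n:ℝ)+1)))
          ((x-1/2)*(1/(x+1/2))) := (telescope (by linarith)).mul_left _
      have hta : Summable (fun n : ℕ => a (n+1)) := (summable_nat_add_iff 1).mpr hD.summable
      have hle : ∑' n : ℕ, -(a (n+1)) ≤ (x-1/2)*(1/(x+1/2)) := by
        rw [← hb.tsum_eq]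
        refine Summable.tsum_le_tsum (fun n => ?_) hta.neg hb.summable
        have := pointwise hx n
        simp only [ha_def]
        push_cast
        linarith
      rw [tsum_neg] at hle
      linarith
    have hfin : (x-1/2)*(1/(x+1/2)) ≤ 2 - 1/x := by
      rw [mul_one_div, div_le_iff₀ (by linarith : (0:ℝ) < x+1/2)]
      have h1 : 1/x ≤ 2 := by
        rw [div_le_iff₀ hx0]; linarith
      have h2 : (1/x)*x = 1 := by field_simp
      nlinarith
    rw [ha0]
    linarith
  · rw [half_hasSum.tsum_eq]
    ring
end
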